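/- arXiv:1812.10147 — 2 statements merged into one kernel-verified Lean document; each statement's English description precedes it below -/
import Mathlib

section
/- Let (X_n) be an irreducible aperiodic Markov chain on a finite state space A with stationary distribution π, and let L_n = Σ_{k=1}^n 1{X_k = X_{n+1}}. Then for any β ∈ ℝ, any ε ∈ [0, π_∧) where π_∧ = min_a π_a, any r > 0, and any initial distribution η: lim_{n→∞} n^β P_η{L_n/n ≤ ε} = 0 and lim_{n→∞} n^β P_η{L_n = r} = 0. -/
open MeasureTheory ENNReal Finset Filter

/-- The finite-dimensional law of a Markov chain `X` (indexed from 0) with real initial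
distribution `η` and real transition matrix `Q`. -/
def IsRealChainLaw {A Ω : Type*} [Fintype A] [MeasurableSpace Ω]
    (P : Measure Ω) (X : ℕ → Ω → A) (η : A → ℝ) (Q : A → A → ℝ) : Prop :=
  ∀ (n : ℕ) (a : ℕ → A),
    P (⋂ i ∈ Finset.range (n + 1), {ω | X i ω = a i}) =
      ENNReal.ofReal (η (a 0) * ∏ i ∈ Finset.range n, Q (a i) (a (i + 1)))

/-- `t`-step transition matrix of a kernel `Q` on a finite set. -/
noncomputable def mpow {A : Type*} [Fintype A] [DecidableEq A] (Q : A → A → ℝ) :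
    ℕ → A → A → ℝ
  | 0 => fun x y => if x = y then 1 else 0
  | (t + 1) => fun x y => ∑ z, Q x z * mpow Q t z y

namespace LnAux
set_option linter.unusedSectionVars false
set_option linter.unusedVariables false

variable {A : Type*} [Fintype A] [Nonempty A] [DecidableEq A]
variable {Q : A → A → ℝ} {π : A → ℝ} {η : A → ℝ}

lemma mpow_succ (t : ℕ) (x y : A) :
    mpow Q (t + 1) x y = ∑ z, Q x z * mpow Q t z y := rfl

lemma mpow_zero (x y : A) : mpow Q 0 x y = if x = y then 1 else 0 := rfl

lemma mpow_nonneg (hQnn : ∀ x y, 0 ≤ Q x y) : ∀ n x y, 0 ≤ mpow Q n x y := by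
  intro n
  induction n with
  | zero => intro x y; rw [mpow_zero]; positivity
  | succ t ih =>
    intro x y; rw [mpow_succ]
    exact Finset.sum_nonneg fun z _ => mul_nonneg (hQnn x z) (ih z y)

lemma mpow_rowsum (hQ : ∀ x, ∑ y, Q x y = 1) : ∀ n x, ∑ y, mpow Q n x y = 1 := by
  intro n
  induction n with
  | zero =>
    intro x; simp [mpow_zero]
  | succ t ih =>
    intro x
    simp only [mpow_succ]
    rw [Finset.sum_comm]
    calc ∑ z, ∑ y, Q x z * mpow Q t z y = ∑ z, Q x z * ∑ y, mpow Q t z y := by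
          simp [Finset.mul_sum]
      _ = 1 := by simp [ih, hQ]

lemma mpow_le_one (hQnn : ∀ x y, 0 ≤ Q x y) (hQ : ∀ x, ∑ y, Q x y = 1) (n : ℕ) (x y : A) :
    mpow Q n x y ≤ 1 := by
  have h := mpow_rowsum (Q := Q) hQ n x
  have : mpow Q n x y ≤ ∑ z, mpow Q n x z :=
    Finset.single_le_sum (f := fun z => mpow Q n x z)
      (fun z _ => mpow_nonneg hQnn n x z) (Finset.mem_univ y)
  linarith

lemma mpow_stat (hstat : ∀ x, ∑ y, π y * Q y x = π x) :
    ∀ n x, ∑ y, π y * mpow Q n y x = π x := by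
  intro n
  induction n with
  | zero => intro x; simp [mpow_zero]
  | succ t ih =>
    intro x
    simp only [mpow_succ]
    calc ∑ y, π y * ∑ z, Q y z * mpow Q t z x
        = ∑ z, (∑ y, π y * Q y z) * mpow Q t z x := by
          simp only [Finset.mul_sum, Finset.sum_mul]
          rw [Finset.sum_comm]
          congr 1; ext y; congr 1; ext z; ring
      _ = ∑ z, π z * mpow Q t z x := by simp [hstat]
      _ = π x := ih x
  -- note: sum_comm orientation may need fixing

lemma mpow_add (s t : ℕ) (x y : A) :
    mpow Q (s + t) x y = ∑ z, mpow Q s x z * mpow Q t z y := by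
  induction s generalizing x with
  | zero => simp [mpow_zero, Finset.sum_ite_eq, Nat.zero_add]
  | succ s ih =>
    have h1 : s + 1 + t = (s + t) + 1 := by omega
    rw [h1, mpow_succ]
    calc ∑ z, Q x z * mpow Q (s + t) z y
        = ∑ z, Q x z * ∑ w, mpow Q s z w * mpow Q t w y := by simp [ih]
      _ = ∑ w, (∑ z, Q x z * mpow Q s z w) * mpow Q t w y := by
          simp only [Finset.mul_sum, Finset.sum_mul]
          rw [Finset.sum_comm]
          congr 1; ext z; congr 1; ext w; ring
      _ = ∑ w, mpow Q (s + 1) x w * mpow Q t w y := by simp [mpow_succ]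


lemma pi_le_one (hπpos : ∀ x, 0 < π x) (hπsum : ∑ x, π x = 1) (x : A) : π x ≤ 1 := by
  have : π x ≤ ∑ y, π y :=
    Finset.single_le_sum (fun y _ => (hπpos y).le) (Finset.mem_univ x)
  rw [hπsum] at this; exact this

/-- the Doeblin sup-distance -/
noncomputable def dd (Q : A → A → ℝ) (π : A → ℝ) (a : A) (n : ℕ) : ℝ :=
  Finset.univ.sup' Finset.univ_nonempty (fun x => |mpow Q n x a - π a|)

lemma le_dd (a : A) (n : ℕ) (x : A) : |mpow Q n x a - π a| ≤ dd Q π a n := by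
  unfold dd
  exact Finset.le_sup' (fun x => |mpow Q n x a - π a|) (Finset.mem_univ x)

lemma dd_nonneg (a : A) (n : ℕ) : 0 ≤ dd Q π a n := by
  obtain ⟨x⟩ := ‹Nonempty A›
  exact le_trans (abs_nonneg _) (le_dd a n x)

lemma dd_zero_le_one (hπpos : ∀ x, 0 < π x) (hπsum : ∑ x, π x = 1) (a : A) : dd Q π a 0 ≤ 1 := by
  apply Finset.sup'_le
  intro x _
  rw [mpow_zero, abs_le]
  have h1 := hπpos a
  have h2 := pi_le_one hπpos hπsum a
  constructor <;> [skip; skip] <;> split <;> simp <;> linarith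

lemma dd_succ_le (hQnn : ∀ x y, 0 ≤ Q x y) (hQ : ∀ x, ∑ y, Q x y = 1) (a : A) (n : ℕ) : dd Q π a (n + 1) ≤ dd Q π a n := by
  apply Finset.sup'_le
  intro x _
  have key : mpow Q (n + 1) x a - π a = ∑ z, Q x z * (mpow Q n z a - π a) := by
    simp only [mul_sub, Finset.sum_sub_distrib, mpow_succ]
    rw [← Finset.sum_mul, hQ x, one_mul]
  rw [key]
  calc |∑ z, Q x z * (mpow Q n z a - π a)| ≤ ∑ z, |Q x z * (mpow Q n z a - π a)| :=
        Finset.abs_sum_le_sum_abs _ _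
    _ ≤ ∑ z, Q x z * dd Q π a n := by
        apply Finset.sum_le_sum
        intro z _
        rw [abs_mul, abs_of_nonneg (hQnn x z)]
        exact mul_le_mul_of_nonneg_left (le_dd a n z) (hQnn x z)
    _ = dd Q π a n := by rw [← Finset.sum_mul, hQ x, one_mul]

lemma dd_anti (hQnn : ∀ x y, 0 ≤ Q x y) (hQ : ∀ x, ∑ y, Q x y = 1) (a : A) : ∀ {m n : ℕ}, m ≤ n → dd Q π a n ≤ dd Q π a m := by
  intro m n h
  induction n with
  | zero => simp_all
  | succ k ih =>
    rcases Nat.lt_or_ge m (k+1) with h'|h'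
    · exact le_trans (dd_succ_le hQnn hQ a k) (ih (by omega))
    · have : m = k + 1 := by omega
      simp [this]

lemma dd_contract (hQnn : ∀ x y, 0 ≤ Q x y) (hQ : ∀ x, ∑ y, Q x y = 1) (hπpos : ∀ x, 0 < π x) (hπsum : ∑ x, π x = 1) (hstat : ∀ x, ∑ y, π y * Q y x = π x) (a : A) {t : ℕ} {δ : ℝ} (hδpos : 0 < δ)
    (hδ : ∀ x y, δ ≤ mpow Q t x y) (n : ℕ) :
    dd Q π a (n + t) ≤ (1 - δ) * dd Q π a n := by
  apply Finset.sup'_le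
  intro x _
  have key : mpow Q (n + t) x a - π a
      = ∑ z, (mpow Q t x z - δ * π z) * (mpow Q n z a - π a) := by
    simp only [sub_mul, mul_sub, Finset.sum_sub_distrib]
    rw [add_comm n t, mpow_add]
    have h1 : ∑ z, mpow Q t x z * π a = π a := by
      rw [← Finset.sum_mul, mpow_rowsum hQ, one_mul]
    have h2 : ∑ z, δ * π z * mpow Q n z a = δ * π a := by
      simp only [mul_assoc, ← Finset.mul_sum]
      rw [mpow_stat hstat]
    have h3 : ∑ z, δ * π z * π a = δ * π a := by
      simp only [mul_assoc, ← Finset.mul_sum, ← Finset.sum_mul]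
      rw [hπsum, one_mul]
    rw [h1, h2, h3]
    ring
  rw [key]
  have hcoeff : ∀ z, 0 ≤ mpow Q t x z - δ * π z := by
    intro z
    have : δ * π z ≤ δ * 1 := by
      apply mul_le_mul_of_nonneg_left (pi_le_one hπpos hπsum z) hδpos.le
    have := hδ x z
    linarith
  calc |∑ z, (mpow Q t x z - δ * π z) * (mpow Q n z a - π a)|
      ≤ ∑ z, |(mpow Q t x z - δ * π z) * (mpow Q n z a - π a)| :=
        Finset.abs_sum_le_sum_abs _ _
    _ ≤ ∑ z, (mpow Q t x z - δ * π z) * dd Q π a n := by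
        apply Finset.sum_le_sum
        intro z _
        rw [abs_mul, abs_of_nonneg (hcoeff z)]
        exact mul_le_mul_of_nonneg_left (le_dd a n z) (hcoeff z)
    _ = (1 - δ) * dd Q π a n := by
        rw [← Finset.sum_mul]
        congr 1
        rw [Finset.sum_sub_distrib, mpow_rowsum hQ]
        simp only [mul_comm δ, ← Finset.sum_mul]
        rw [hπsum]
        ring

lemma dd_small (hQnn : ∀ x y, 0 ≤ Q x y) (hQ : ∀ x, ∑ y, Q x y = 1) (hπpos : ∀ x, 0 < π x) (hπsum : ∑ x, π x = 1) (hstat : ∀ x, ∑ y, π y * Q y x = π x) (a : A) {t : ℕ} (htpos : 0 < t) {δ : ℝ} (hδpos : 0 < δ)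
    (hδ : ∀ x y, δ ≤ mpow Q t x y) {ζ : ℝ} (hζ : 0 < ζ) :
    ∃ k, ∀ n ≥ k, ∀ x, |mpow Q n x a - π a| ≤ ζ := by
  have hδ1 : δ ≤ 1 := le_trans (hδ (Classical.arbitrary A) (Classical.arbitrary A))
    (mpow_le_one hQnn hQ t _ _)
  have hgeom : ∀ m : ℕ, dd Q π a (m * t) ≤ (1 - δ) ^ m := by
    intro m
    induction m with
    | zero => simpa using dd_zero_le_one hπpos hπsum a
    | succ m ih =>
      have : (m + 1) * t = m * t + t := by ring
      rw [this, pow_succ]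
      calc dd Q π a (m * t + t) ≤ (1 - δ) * dd Q π a (m * t) :=
            dd_contract hQnn hQ hπpos hπsum hstat a hδpos hδ (m * t)
        _ ≤ (1 - δ) * (1 - δ) ^ m := by
            apply mul_le_mul_of_nonneg_left ih (by linarith)
        _ = (1 - δ) ^ m * (1 - δ) := by ring
  obtain ⟨m, hm⟩ : ∃ m : ℕ, (1 - δ) ^ m < ζ := by
    have h := tendsto_pow_atTop_nhds_zero_of_lt_one (by linarith : (0:ℝ) ≤ 1 - δ)
      (by linarith : (1:ℝ) - δ < 1)
    have := (h.eventually (eventually_lt_nhds hζ)).exists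
    exact this
  refine ⟨m * t, fun n hn x => ?_⟩
  calc |mpow Q n x a - π a| ≤ dd Q π a n := le_dd a n x
    _ ≤ dd Q π a (m * t) := dd_anti hQnn hQ a hn
    _ ≤ (1 - δ) ^ m := hgeom m
    _ ≤ ζ := hm.le

/-- expected number of visits to `a` in the first `m` steps, started at `x` -/
noncomputable def ee (Q : A → A → ℝ) (a : A) (m : ℕ) (x : A) : ℝ :=
  ∑ k ∈ Finset.range m, mpow Q k x a

/-- the tilted backward vector -/
noncomputable def gt (Q : A → A → ℝ) (a : A) (θ : ℝ) : ℕ → A → ℝ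
  | 0 => fun _ => 1
  | (m + 1) => fun x =>
      Real.exp (-θ * (if x = a then 1 else 0)) * ∑ y, Q x y * gt Q a θ m y

lemma gt_zero (a : A) (θ : ℝ) (x : A) : gt Q a θ 0 x = 1 := rfl
lemma gt_succ (a : A) (θ : ℝ) (m : ℕ) (x : A) :
    gt Q a θ (m + 1) x
      = Real.exp (-θ * (if x = a then 1 else 0)) * ∑ y, Q x y * gt Q a θ m y := rfl

lemma ee_nonneg (hQnn : ∀ x y, 0 ≤ Q x y) (a : A) (m : ℕ) (x : A) : 0 ≤ ee Q a m x :=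
  Finset.sum_nonneg fun k _ => mpow_nonneg hQnn k x a

lemma ee_le (hQnn : ∀ x y, 0 ≤ Q x y) (hQ : ∀ x, ∑ y, Q x y = 1) (a : A) (m : ℕ) (x : A) :
    ee Q a m x ≤ (m : ℝ) := by
  calc ee Q a m x ≤ ∑ _k ∈ Finset.range m, (1:ℝ) :=
        Finset.sum_le_sum fun k _ => mpow_le_one hQnn hQ k x a
    _ = m := by simp

lemma ee_succ (a : A) (m : ℕ) (x : A) :
    ee Q a (m + 1) x = (if x = a then 1 else 0) + ∑ y, Q x y * ee Q a m y := by
  unfold ee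
  rw [Finset.sum_range_succ']
  have h1 : ∀ k, mpow Q (k + 1) x a = ∑ y, Q x y * mpow Q k y a := fun _ => rfl
  simp only [h1]
  rw [Finset.sum_comm]
  have : mpow Q 0 x a = if x = a then 1 else 0 := rfl
  rw [this, add_comm]
  congr 1
  congr 1; ext y
  rw [Finset.mul_sum]

lemma exp_neg_le {u : ℝ} (hu : 0 ≤ u) : Real.exp (-u) ≤ 1 - u + u ^ 2 := by
  have h1 : (1:ℝ) + u ≤ Real.exp u := by linarith [Real.add_one_le_exp u]
  have h2 : (0:ℝ) < 1 + u := by linarith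
  have h3 : Real.exp (-u) = 1 / Real.exp u := by
    rw [Real.exp_neg]; ring
  rw [h3]
  have h4 : 1 / Real.exp u ≤ 1 / (1 + u) := by
    apply one_div_le_one_div_of_le h2 h1
  refine le_trans h4 ?_
  rw [div_le_iff₀ h2]
  nlinarith

lemma gt_nonneg (hQnn : ∀ x y, 0 ≤ Q x y) (a : A) (θ : ℝ) :
    ∀ m x, 0 ≤ gt Q a θ m x := by
  intro m
  induction m with
  | zero => intro x; rw [gt_zero]; norm_num
  | succ m ih =>
    intro x
    rw [gt_succ]
    apply mul_nonneg (Real.exp_nonneg _)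
    exact Finset.sum_nonneg fun y _ => mul_nonneg (hQnn x y) (ih y)

lemma gt_le_one (hQnn : ∀ x y, 0 ≤ Q x y) (hQ : ∀ x, ∑ y, Q x y = 1)
    (a : A) {θ : ℝ} (hθ : 0 ≤ θ) : ∀ m x, gt Q a θ m x ≤ 1 := by
  intro m
  induction m with
  | zero => intro x; rw [gt_zero]
  | succ m ih =>
    intro x
    rw [gt_succ]
    have hE : Real.exp (-θ * (if x = a then 1 else 0)) ≤ 1 := by
      rw [Real.exp_le_one_iff]
      have : (0:ℝ) ≤ (if x = a then 1 else 0) := by positivity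
      nlinarith
    have hS : ∑ y, Q x y * gt Q a θ m y ≤ 1 := by
      calc ∑ y, Q x y * gt Q a θ m y ≤ ∑ y, Q x y * 1 :=
            Finset.sum_le_sum fun y _ => mul_le_mul_of_nonneg_left (ih y) (hQnn x y)
        _ = 1 := by simp [hQ]
    have hSnn : 0 ≤ ∑ y, Q x y * gt Q a θ m y :=
      Finset.sum_nonneg fun y _ => mul_nonneg (hQnn x y) (gt_nonneg hQnn a θ m y)
    calc Real.exp (-θ * _) * ∑ y, Q x y * gt Q a θ m y ≤ 1 * 1 := by
          apply mul_le_mul hE hS hSnn zero_le_one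
      _ = 1 := by ring

lemma gt_lower (hQnn : ∀ x y, 0 ≤ Q x y) (hQ : ∀ x, ∑ y, Q x y = 1)
    (a : A) {θ : ℝ} (hθ : 0 ≤ θ) (hθ1 : θ ≤ 1) :
    ∀ m x, 1 - θ * ee Q a m x ≤ gt Q a θ m x := by
  intro m
  induction m with
  | zero => intro x; simp [gt_zero, ee]
  | succ m ih =>
    intro x
    rw [gt_succ, ee_succ]
    set χ : ℝ := if x = a then 1 else 0 with hχ
    have hχ0 : 0 ≤ χ := by rw [hχ]; positivity
    have hχ1 : χ ≤ 1 := by rw [hχ]; split <;> norm_num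
    set S := ∑ y, Q x y * gt Q a θ m y with hS
    set Eb := ∑ y, Q x y * ee Q a m y with hEb
    have hEbnn : 0 ≤ Eb :=
      Finset.sum_nonneg fun y _ => mul_nonneg (hQnn x y) (ee_nonneg hQnn a m y)
    have hSnn : 0 ≤ S :=
      Finset.sum_nonneg fun y _ => mul_nonneg (hQnn x y) (gt_nonneg hQnn a θ m y)
    have hSlow : 1 - θ * Eb ≤ S := by
      rw [hS, hEb]
      have : ∑ y, Q x y * (1 - θ * ee Q a m y) ≤ ∑ y, Q x y * gt Q a θ m y :=
        Finset.sum_le_sum fun y _ => mul_le_mul_of_nonneg_left (ih y) (hQnn x y)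
      calc 1 - θ * ∑ y, Q x y * ee Q a m y
          = ∑ y, Q x y * (1 - θ * ee Q a m y) := by
            rw [show ∑ y, Q x y * (1 - θ * ee Q a m y)
                = ∑ y, (Q x y - θ * (Q x y * ee Q a m y)) from
              Finset.sum_congr rfl fun y _ => by ring]
            rw [Finset.sum_sub_distrib, ← Finset.mul_sum, hQ]
        _ ≤ S := this
    have hEfac : 1 - θ * χ ≤ Real.exp (-θ * χ) := by
      have := Real.add_one_le_exp (-θ * χ)
      linarith
    have hfacnn : 0 ≤ 1 - θ * χ := by nlinarith
    calc 1 - θ * (χ + Eb) ≤ (1 - θ * χ) * (1 - θ * Eb) := by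
          nlinarith [mul_nonneg (mul_nonneg (mul_nonneg hθ hθ) hχ0) hEbnn]
      _ ≤ (1 - θ * χ) * S := mul_le_mul_of_nonneg_left hSlow hfacnn
      _ ≤ Real.exp (-θ * χ) * S := mul_le_mul_of_nonneg_right hEfac hSnn

lemma gt_quad (hQnn : ∀ x y, 0 ≤ Q x y) (hQ : ∀ x, ∑ y, Q x y = 1)
    (a : A) {θ : ℝ} (hθ : 0 ≤ θ) (hθ1 : θ ≤ 1) :
    ∀ m x, gt Q a θ m x ≤ 1 - θ * ee Q a m x + θ ^ 2 * (m : ℝ) ^ 2 := by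
  intro m
  induction m with
  | zero => intro x; simp [gt_zero, ee]
  | succ m ih =>
    intro x
    rw [gt_succ, ee_succ]
    set χ : ℝ := if x = a then 1 else 0 with hχ
    have hχ0 : 0 ≤ χ := by rw [hχ]; positivity
    have hχ1 : χ ≤ 1 := by rw [hχ]; split <;> norm_num
    have hχsq : χ ^ 2 ≤ χ := by rw [hχ]; split <;> norm_num
    set S := ∑ y, Q x y * gt Q a θ m y with hS
    set Eb := ∑ y, Q x y * ee Q a m y with hEb
    have hEbnn : 0 ≤ Eb :=
      Finset.sum_nonneg fun y _ => mul_nonneg (hQnn x y) (ee_nonneg hQnn a m y)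
    have hEble : Eb ≤ (m : ℝ) := by
      rw [hEb]
      calc ∑ y, Q x y * ee Q a m y ≤ ∑ y, Q x y * (m : ℝ) :=
            Finset.sum_le_sum fun y _ =>
              mul_le_mul_of_nonneg_left (ee_le hQnn hQ a m y) (hQnn x y)
        _ = (m : ℝ) := by rw [← Finset.sum_mul, hQ]; ring
    have hSnn : 0 ≤ S :=
      Finset.sum_nonneg fun y _ => mul_nonneg (hQnn x y) (gt_nonneg hQnn a θ m y)
    have hSle1 : S ≤ 1 := by
      rw [hS]
      calc ∑ y, Q x y * gt Q a θ m y ≤ ∑ y, Q x y * 1 :=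
            Finset.sum_le_sum fun y _ =>
              mul_le_mul_of_nonneg_left (gt_le_one hQnn hQ a hθ m y) (hQnn x y)
        _ = 1 := by simp [hQ]
    have hSup : S ≤ 1 - θ * Eb + θ ^ 2 * (m : ℝ) ^ 2 := by
      rw [hS, hEb]
      calc ∑ y, Q x y * gt Q a θ m y
          ≤ ∑ y, Q x y * (1 - θ * ee Q a m y + θ ^ 2 * (m:ℝ) ^ 2) :=
            Finset.sum_le_sum fun y _ => mul_le_mul_of_nonneg_left (ih y) (hQnn x y)
        _ = 1 - θ * ∑ y, Q x y * ee Q a m y + θ ^ 2 * (m:ℝ) ^ 2 := by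
            rw [show ∑ y, Q x y * (1 - θ * ee Q a m y + θ ^ 2 * (m:ℝ) ^ 2)
                = ∑ y, (Q x y - θ * (Q x y * ee Q a m y) + θ ^ 2 * (m:ℝ) ^ 2 * Q x y) from
              Finset.sum_congr rfl fun y _ => by ring]
            rw [Finset.sum_add_distrib, Finset.sum_sub_distrib, ← Finset.mul_sum,
              ← Finset.mul_sum, hQ]
            ring
    have hSlow : 1 - θ * Eb ≤ S := by
      rw [hS, hEb]
      have h := gt_lower hQnn hQ a hθ hθ1 m
      calc 1 - θ * ∑ y, Q x y * ee Q a m y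
          = ∑ y, Q x y * (1 - θ * ee Q a m y) := by
            rw [show ∑ y, Q x y * (1 - θ * ee Q a m y)
                = ∑ y, (Q x y - θ * (Q x y * ee Q a m y)) from
              Finset.sum_congr rfl fun y _ => by ring]
            rw [Finset.sum_sub_distrib, ← Finset.mul_sum, hQ]
        _ ≤ ∑ y, Q x y * gt Q a θ m y :=
            Finset.sum_le_sum fun y _ => mul_le_mul_of_nonneg_left (h y) (hQnn x y)
    -- exponential factor bound
    have hexp : Real.exp (-θ * χ) ≤ 1 - θ * χ + θ ^ 2 * χ := by
      have h1 : Real.exp (-(θ * χ)) ≤ 1 - θ * χ + (θ * χ) ^ 2 :=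
        exp_neg_le (mul_nonneg hθ hχ0)
      have h2 : (θ * χ) ^ 2 ≤ θ ^ 2 * χ := by
        have : (θ * χ) ^ 2 = θ ^ 2 * χ ^ 2 := by ring
        rw [this]
        nlinarith
      rw [neg_mul]
      linarith
    have hexpnn : 0 ≤ Real.exp (-θ * χ) := Real.exp_nonneg _
    have hfac_nn : 0 ≤ 1 - θ * χ + θ ^ 2 * χ := by nlinarith
    -- main estimate
    have h1S : 1 - S ≤ θ * Eb := by linarith
    have hχS : χ * S ≤ 1 := by nlinarith
    have e1 : θ * χ * (1 - S) ≤ θ * χ * (θ * Eb) :=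
      mul_le_mul_of_nonneg_left h1S (mul_nonneg hθ hχ0)
    have e2 : θ ^ 2 * (χ * S) ≤ θ ^ 2 * 1 :=
      mul_le_mul_of_nonneg_left hχS (sq_nonneg θ)
    have e3 : θ * χ * (θ * Eb) ≤ θ ^ 2 * (m:ℝ) := by
      have h4 : χ * Eb ≤ Eb := mul_le_of_le_one_left hEbnn hχ1
      have h5 : θ ^ 2 * (χ * Eb) ≤ θ ^ 2 * Eb := mul_le_mul_of_nonneg_left h4 (sq_nonneg θ)
      have h6 : θ ^ 2 * Eb ≤ θ ^ 2 * (m:ℝ) := mul_le_mul_of_nonneg_left hEble (sq_nonneg θ)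
      nlinarith
    have e4 : 0 ≤ θ ^ 2 * (m:ℝ) := mul_nonneg (sq_nonneg θ) (Nat.cast_nonneg m)
    calc Real.exp (-θ * χ) * S ≤ (1 - θ * χ + θ ^ 2 * χ) * S :=
          mul_le_mul_of_nonneg_right hexp hSnn
      _ ≤ S - θ * χ + θ * χ * (θ * Eb) + θ ^ 2 * (χ * S) := by nlinarith [e1]
      _ ≤ S - θ * χ + θ ^ 2 * (m:ℝ) + θ ^ 2 := by nlinarith [e2, e3]
      _ ≤ (1 - θ * Eb + θ ^ 2 * (m:ℝ) ^ 2) - θ * χ + θ ^ 2 * (m:ℝ) + θ ^ 2 := by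
          linarith [hSup]
      _ ≤ 1 - θ * (χ + Eb) + θ ^ 2 * (((m:ℕ) + 1 : ℕ) : ℝ) ^ 2 := by
          push_cast
          nlinarith [e4]

lemma gt_submult (hQnn : ∀ x y, 0 ≤ Q x y) (a : A) (θ : ℝ) {k : ℕ} {c : ℝ}
    (hc : ∀ y, gt Q a θ k y ≤ c) : ∀ m x, gt Q a θ (m + k) x ≤ c * gt Q a θ m x := by
  intro m
  induction m with
  | zero => intro x; rw [gt_zero]; simpa using hc x
  | succ m ih =>
    intro x
    have h1 : m + 1 + k = (m + k) + 1 := by omega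
    rw [h1, gt_succ, gt_succ]
    have hsum : ∑ y, Q x y * gt Q a θ (m + k) y ≤ ∑ y, Q x y * (c * gt Q a θ m y) :=
      Finset.sum_le_sum fun y _ => mul_le_mul_of_nonneg_left (ih y) (hQnn x y)
    have heq : ∑ y, Q x y * (c * gt Q a θ m y) = c * ∑ y, Q x y * gt Q a θ m y := by
      rw [Finset.mul_sum]
      exact Finset.sum_congr rfl fun y _ => by ring
    calc Real.exp (-θ * (if x = a then 1 else 0)) * ∑ y, Q x y * gt Q a θ (m + k) y
        ≤ Real.exp (-θ * (if x = a then 1 else 0)) * ∑ y, Q x y * (c * gt Q a θ m y) :=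
          mul_le_mul_of_nonneg_left hsum (Real.exp_nonneg _)
      _ = c * (Real.exp (-θ * (if x = a then 1 else 0)) * ∑ y, Q x y * gt Q a θ m y) := by
          rw [heq]; ring

lemma gt_pow (hQnn : ∀ x y, 0 ≤ Q x y) (a : A) (θ : ℝ) {T : ℕ} {c : ℝ} (hc0 : 0 ≤ c)
    (hc : ∀ y, gt Q a θ T y ≤ c) : ∀ m r x, gt Q a θ (r + m * T) x ≤ c ^ m * gt Q a θ r x := by
  intro m
  induction m with
  | zero => intro r x; simp
  | succ m ih =>
    intro r x
    have h1 : r + (m + 1) * T = (r + m * T) + T := by ring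
    rw [h1]
    calc gt Q a θ ((r + m * T) + T) x ≤ c * gt Q a θ (r + m * T) x :=
          gt_submult hQnn a θ hc _ x
      _ ≤ c * (c ^ m * gt Q a θ r x) :=
          mul_le_mul_of_nonneg_left (ih r x) hc0
      _ = c ^ (m + 1) * gt Q a θ r x := by ring

lemma gt_div_bound (hQnn : ∀ x y, 0 ≤ Q x y) (hQ : ∀ x, ∑ y, Q x y = 1)
    (a : A) {θ : ℝ} (hθ : 0 ≤ θ) {T : ℕ} {c : ℝ} (hc0 : 0 ≤ c)
    (hc : ∀ y, gt Q a θ T y ≤ c) (n : ℕ) (x : A) :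
    gt Q a θ n x ≤ c ^ (n / T) := by
  have h1 : n = n % T + (n / T) * T := (Nat.mod_add_div' n T).symm
  calc gt Q a θ n x = gt Q a θ (n % T + (n / T) * T) x := by rw [← h1]
    _ ≤ c ^ (n / T) * gt Q a θ (n % T) x := gt_pow hQnn a θ hc0 hc _ _ x
    _ ≤ c ^ (n / T) * 1 :=
        mul_le_mul_of_nonneg_left (gt_le_one hQnn hQ a hθ _ x) (pow_nonneg hc0 _)
    _ = c ^ (n / T) := by ring

/-- the tilted step matrix -/
noncomputable def Mt (Q : A → A → ℝ) (a : A) (θ : ℝ) (x y : A) : ℝ :=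
  Q x y * Real.exp (-θ * (if x = a then 1 else 0))

lemma pathSum_eq (a : A) (θ : ℝ) :
    ∀ (n : ℕ) (v : A → ℝ),
      (∑ f : Fin (n + 1) → A,
        v (f 0) * ∏ i : Fin n, Mt Q a θ (f i.castSucc) (f i.succ))
      = ∑ x, v x * gt Q a θ n x := by
  intro n
  induction n with
  | zero =>
    intro v
    rw [← Equiv.sum_comp (Equiv.funUnique (Fin 1) A).symm
      (fun f : Fin 1 → A => v (f 0) * ∏ i : Fin 0, Mt Q a θ (f i.castSucc) (f i.succ))]
    simp [gt_zero]
  | succ n ih =>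
    intro v
    rw [← Equiv.sum_comp (Fin.consEquiv (fun _ : Fin (n + 2) => A))
      (fun f : Fin (n + 2) → A => v (f 0) * ∏ i : Fin (n + 1), Mt Q a θ (f i.castSucc) (f i.succ))]
    rw [Fintype.sum_prod_type]
    have hterm : ∀ (x : A) (h : Fin (n + 1) → A),
        (Fin.consEquiv (fun _ : Fin (n + 2) => A)) (x, h) = Fin.cons x h := fun _ _ => rfl
    have hsplit : ∀ (x : A) (h : Fin (n + 1) → A),
        v ((Fin.cons x h : Fin (n + 2) → A) 0) * ∏ i : Fin (n + 1),
            Mt Q a θ ((Fin.cons x h : Fin (n + 2) → A) i.castSucc)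
              ((Fin.cons x h : Fin (n + 2) → A) i.succ)
        = v x * (Mt Q a θ x (h 0) *
            ∏ i : Fin n, Mt Q a θ (h i.castSucc) (h i.succ)) := by
      intro x h
      simp only [Fin.prod_univ_succ, Fin.castSucc_zero, Fin.cons_zero, Fin.cons_succ,
        ← Fin.succ_castSucc]
    simp only [hterm, hsplit]
    have hswap : ∑ x, ∑ h : Fin (n + 1) → A,
        v x * (Mt Q a θ x (h 0) * ∏ i : Fin n, Mt Q a θ (h i.castSucc) (h i.succ))
        = ∑ h : Fin (n + 1) → A,
            (∑ x, v x * Mt Q a θ x (h 0)) * ∏ i : Fin n, Mt Q a θ (h i.castSucc) (h i.succ) := by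
      rw [Finset.sum_comm]
      apply Finset.sum_congr rfl
      intro h _
      rw [Finset.sum_mul]
      apply Finset.sum_congr rfl
      intro x _
      ring
    rw [hswap, ih (fun y => ∑ x, v x * Mt Q a θ x y)]
    have : ∀ x, (∑ y, Mt Q a θ x y * gt Q a θ n y) = gt Q a θ (n + 1) x := by
      intro x
      rw [gt_succ, Finset.mul_sum]
      apply Finset.sum_congr rfl
      intro y _
      unfold Mt
      ring
    calc ∑ y, (∑ x, v x * Mt Q a θ x y) * gt Q a θ n y
        = ∑ y, ∑ x, v x * (Mt Q a θ x y * gt Q a θ n y) := by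
          apply Finset.sum_congr rfl
          intro y _
          rw [Finset.sum_mul]
          exact Finset.sum_congr rfl fun x _ => by ring
      _ = ∑ x, v x * ∑ y, Mt Q a θ x y * gt Q a θ n y := by
          rw [Finset.sum_comm]
          exact Finset.sum_congr rfl fun x _ => by rw [Finset.mul_sum]
      _ = ∑ x, v x * gt Q a θ (n + 1) x := by
          exact Finset.sum_congr rfl fun x _ => by rw [this x]




/-- path weight of a word of length `n+1` -/
noncomputable def Wfin (η : A → ℝ) (Q : A → A → ℝ) (n : ℕ) (f : Fin (n + 1) → A) : ℝ :=
  η (f 0) * ∏ i : Fin n, Q (f i.castSucc) (f i.succ)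

/-- number of visits to `a` among the first `n` states of the word -/
noncomputable def NfinR (a : A) (n : ℕ) (f : Fin (n + 1) → A) : ℝ :=
  ∑ i : Fin n, if f i.castSucc = a then (1 : ℝ) else 0

lemma Wfin_nonneg (hηnn : ∀ x, 0 ≤ η x) (hQnn : ∀ x y, 0 ≤ Q x y) (n : ℕ)
    (f : Fin (n + 1) → A) : 0 ≤ Wfin η Q n f :=
  mul_nonneg (hηnn _) (Finset.prod_nonneg fun i _ => hQnn _ _)

open Classical in
lemma chernoff (hηnn : ∀ x, 0 ≤ η x) (hQnn : ∀ x y, 0 ≤ Q x y)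
    (a : A) {θ ε : ℝ} (hθ : 0 ≤ θ) (n : ℕ) :
    ∑ f ∈ Finset.univ.filter (fun f : Fin (n + 1) → A => NfinR a n f ≤ ε * n), Wfin η Q n f
      ≤ Real.exp (θ * (ε * n)) * ∑ x, η x * gt Q a θ n x := by
  have key : ∀ f : Fin (n + 1) → A,
      Real.exp (θ * (ε * n)) * (Real.exp (-θ * NfinR a n f) * Wfin η Q n f)
        = Real.exp (θ * (ε * n)) *
          (η (f 0) * ∏ i : Fin n, Mt Q a θ (f i.castSucc) (f i.succ)) := by
    intro f
    congr 1
    unfold Wfin NfinR Mt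
    rw [show -θ * (∑ i : Fin n, if f i.castSucc = a then (1:ℝ) else 0)
        = ∑ i : Fin n, -θ * (if f i.castSucc = a then (1:ℝ) else 0) from Finset.mul_sum _ _ _]
    rw [Real.exp_sum]
    rw [Finset.prod_mul_distrib]
    ring
  calc ∑ f ∈ Finset.univ.filter (fun f : Fin (n + 1) → A => NfinR a n f ≤ ε * n), Wfin η Q n f
      ≤ ∑ f ∈ Finset.univ.filter (fun f : Fin (n + 1) → A => NfinR a n f ≤ ε * n),
          Real.exp (θ * (ε * n - NfinR a n f)) * Wfin η Q n f := by
        apply Finset.sum_le_sum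
        intro f hf
        rw [Finset.mem_filter] at hf
        have h1 : 0 ≤ θ * (ε * n - NfinR a n f) := mul_nonneg hθ (by linarith [hf.2])
        have h2 : 1 ≤ Real.exp (θ * (ε * n - NfinR a n f)) := Real.one_le_exp h1
        nlinarith [Wfin_nonneg hηnn hQnn n f]
    _ ≤ ∑ f : Fin (n + 1) → A, Real.exp (θ * (ε * n - NfinR a n f)) * Wfin η Q n f := by
        apply Finset.sum_le_sum_of_subset_of_nonneg (Finset.filter_subset _ _)
        intro f _ _
        exact mul_nonneg (Real.exp_nonneg _) (Wfin_nonneg hηnn hQnn n f)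
    _ = ∑ f : Fin (n + 1) → A,
          Real.exp (θ * (ε * n)) * (Real.exp (-θ * NfinR a n f) * Wfin η Q n f) := by
        apply Finset.sum_congr rfl
        intro f _
        rw [show θ * (ε * n - NfinR a n f) = θ * (ε * n) + (-θ * NfinR a n f) from by ring]
        rw [Real.exp_add]
        ring
    _ = Real.exp (θ * (ε * n)) *
          ∑ f : Fin (n + 1) → A,
            η (f 0) * ∏ i : Fin n, Mt Q a θ (f i.castSucc) (f i.succ) := by
        simp only [key]
        rw [← Finset.mul_sum]
    _ = Real.exp (θ * (ε * n)) * ∑ x, η x * gt Q a θ n x := by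
        rw [pathSum_eq]



set_option maxHeartbeats 2000000 in
lemma key_bound (hQnn : ∀ x y, 0 ≤ Q x y) (hQ : ∀ x, ∑ y, Q x y = 1)
    (hprim : ∃ t : ℕ, ∀ a b, 0 < mpow Q t a b)
    (hπpos : ∀ x, 0 < π x) (hπsum : ∑ x, π x = 1)
    (hstat : ∀ x, ∑ y, π y * Q y x = π x)
    (hηnn : ∀ x, 0 ≤ η x) (hηsum : ∑ x, η x = 1)
    (a : A) {ε : ℝ} (hε : 0 ≤ ε) (hεa : ε < π a) :
    ∃ (C q : ℝ) (T : ℕ), 0 ≤ C ∧ 0 ≤ q ∧ q < 1 ∧ 1 ≤ T ∧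
      ∀ n : ℕ,
        ∑ f ∈ Finset.univ.filter (fun f : Fin (n + 1) → A => NfinR a n f ≤ ε * n),
            Wfin η Q n f ≤ C * q ^ (n / T) := by
  obtain ⟨t₀, ht₀⟩ := hprim
  obtain ⟨t, htpos, ht⟩ : ∃ t, 0 < t ∧ ∀ x y, 0 < mpow Q t x y := by
    rcases Nat.eq_zero_or_pos t₀ with h0 | hpos
    · subst h0
      refine ⟨1, one_pos, fun x y => ?_⟩
      have hall : ∀ z w : A, z = w := by
        intro z w
        by_contra hzw
        have h := ht₀ z w
        rw [mpow_zero, if_neg hzw] at h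
        exact lt_irrefl 0 h
      have h1 : mpow Q 1 x y = ∑ z, Q x z * mpow Q 0 z y := rfl
      have h2 : ∀ z : A, mpow Q 0 z y = 1 := by
        intro z
        rw [mpow_zero, if_pos (hall z y)]
      rw [h1]
      calc (0:ℝ) < 1 := one_pos
        _ = ∑ z, Q x z * mpow Q 0 z y := by simp [h2, hQ x]
    · exact ⟨t₀, hpos, ht₀⟩
  set δ := Finset.univ.inf' Finset.univ_nonempty (fun p : A × A => mpow Q t p.1 p.2) with hδdef
  have hδpos : 0 < δ := by
    rw [hδdef, Finset.lt_inf'_iff]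
    exact fun p _ => ht p.1 p.2
  have hδle : ∀ x y, δ ≤ mpow Q t x y := by
    intro x y
    exact Finset.inf'_le _ (Finset.mem_univ (x, y))
  set s := (π a - ε) / 4 with hsdef
  have hπa1 : π a ≤ 1 := pi_le_one hπpos hπsum a
  have hspos : 0 < s := by rw [hsdef]; linarith
  have hs14 : s ≤ 1/4 := by rw [hsdef]; linarith
  obtain ⟨k, hk⟩ := dd_small hQnn hQ hπpos hπsum hstat a htpos hδpos hδle hspos
  set T := max 1 (Nat.ceil ((k:ℝ) / s)) with hTdef
  have hT1 : 1 ≤ T := le_max_left _ _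
  have hTposn : 0 < T := hT1
  have hTpos : (0:ℝ) < T := by exact_mod_cast hTposn
  have hkT : (k:ℝ) ≤ s * T := by
    have h1 : (k:ℝ)/s ≤ Nat.ceil ((k:ℝ)/s) := Nat.le_ceil _
    have h2 : ((Nat.ceil ((k:ℝ)/s)) : ℝ) ≤ (T:ℝ) := by
      exact_mod_cast le_max_right 1 (Nat.ceil ((k:ℝ)/s))
    rw [div_le_iff₀ hspos] at h1
    nlinarith [mul_le_mul_of_nonneg_left h2 hspos.le]
  have hkTnat : k ≤ T := by
    have h4 : s * (T:ℝ) ≤ (1/4) * T := mul_le_mul_of_nonneg_right hs14 hTpos.le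
    have h3 : (k:ℝ) ≤ (T:ℝ) := by linarith
    exact_mod_cast h3
  have hTe : ∀ x, (ε + 2*s) * T ≤ ee Q a T x := by
    intro x
    have hsplit : ee Q a T x = (∑ j ∈ Finset.range k, mpow Q j x a)
        + ∑ j ∈ Finset.Ico k T, mpow Q j x a := by
      unfold ee
      rw [Finset.range_eq_Ico, ← Finset.sum_Ico_consecutive _ (Nat.zero_le k) hkTnat,
        ← Finset.range_eq_Ico]
    have h1 : (0:ℝ) ≤ ∑ j ∈ Finset.range k, mpow Q j x a :=
      Finset.sum_nonneg fun j _ => mpow_nonneg hQnn j x a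
    have h2 : ((T - k : ℕ):ℝ) * (π a - s) ≤ ∑ j ∈ Finset.Ico k T, mpow Q j x a := by
      have hterm : ∀ j ∈ Finset.Ico k T, π a - s ≤ mpow Q j x a := by
        intro j hj
        rw [Finset.mem_Ico] at hj
        have h := hk j hj.1 x
        rw [abs_le] at h
        linarith [h.1]
      calc ((T - k : ℕ):ℝ) * (π a - s) = (Finset.Ico k T).card • (π a - s) := by
            rw [Nat.card_Ico, nsmul_eq_mul]
        _ ≤ ∑ j ∈ Finset.Ico k T, mpow Q j x a := Finset.card_nsmul_le_sum _ _ _ hterm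
    have hcast : ((T - k : ℕ):ℝ) = (T:ℝ) - k := by
      rw [Nat.cast_sub hkTnat]
    have hεs : ε + 3*s ≤ 1 := by rw [hsdef]; linarith
    have hfinal : (ε + 2*s) * T ≤ ((T:ℝ) - k) * (π a - s) := by
      have hπas : π a - s = ε + 3*s := by rw [hsdef]; ring
      rw [hπas]
      have hknn : (0:ℝ) ≤ k := Nat.cast_nonneg k
      have hεs0 : (0:ℝ) ≤ ε + 3*s := by linarith
      have h7 : (k:ℝ)*(ε+3*s) ≤ (k:ℝ)*1 := mul_le_mul_of_nonneg_left hεs hknn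
      nlinarith [hkT, h7]
    rw [hsplit]
    rw [hcast] at h2
    linarith
  set θ := s / T with hθdef
  have hθpos : 0 < θ := div_pos hspos hTpos
  have hθT : θ * T = s := by rw [hθdef]; field_simp
  have hθ1 : θ ≤ 1 := by
    rw [hθdef, div_le_one hTpos]
    have h1 : (1:ℝ) ≤ T := by exact_mod_cast hT1
    linarith [hs14]
  have hgT : ∀ x, gt Q a θ T x ≤ 1 - s*ε - s^2 := by
    intro x
    have h1 := gt_quad hQnn hQ a hθpos.le hθ1 T x
    have h2 : θ * ((ε + 2*s) * T) ≤ θ * ee Q a T x :=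
      mul_le_mul_of_nonneg_left (hTe x) hθpos.le
    have h3 : θ * ((ε + 2*s) * T) = s*ε + 2*s^2 := by
      rw [show θ * ((ε + 2*s)*(T:ℝ)) = (θ*T)*(ε+2*s) from by ring, hθT]; ring
    have h4 : θ^2 * (T:ℝ)^2 = s^2 := by
      rw [show θ^2*(T:ℝ)^2 = (θ*(T:ℝ))^2 from by ring, hθT]
    linarith
  set c := (1 - s*ε) * (1 - s^2/2) with hcdef
  have hsεnn : 0 ≤ s * ε := mul_nonneg hspos.le hε
  have hε1 : ε ≤ 1 := le_of_lt (lt_of_lt_of_le hεa hπa1)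
  have hsε14 : s * ε ≤ 1/4 := by
    have h := mul_le_mul hs14 hε1 hε (by norm_num : (0:ℝ) ≤ 1/4)
    linarith
  have hsε : s * ε < 1 := by linarith
  have hs2 : s^2 ≤ 1/16 := by nlinarith [hs14, hspos]
  have hf1 : (0:ℝ) ≤ 1 - s*ε := by linarith
  have hf2 : (0:ℝ) ≤ 1 - s^2/2 := by linarith
  have hc0 : 0 ≤ c := by rw [hcdef]; exact mul_nonneg hf1 hf2
  have hgc : ∀ x, gt Q a θ T x ≤ c := by
    intro x
    have h := hgT x
    rw [hcdef]
    nlinarith [h, hsεnn, sq_nonneg s, mul_nonneg hsεnn (sq_nonneg s)]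
  set C := Real.exp (θ * (ε * T)) with hCdef
  have hC0 : 0 ≤ C := Real.exp_nonneg _
  set q := C * c with hqdef
  have hq0 : 0 ≤ q := mul_nonneg hC0 hc0
  have hθεT : θ * (ε * T) = s * ε := by
    rw [show θ*(ε*(T:ℝ)) = (θ*(T:ℝ))*ε from by ring, hθT]
  have hq1 : q < 1 := by
    have h1 : (1:ℝ) - s*ε ≤ Real.exp (-(s*ε)) := by
      linarith [Real.add_one_le_exp (-(s*ε))]
    have h2 : Real.exp (s*ε) * (1 - s*ε) ≤ 1 := by
      calc Real.exp (s*ε) * (1 - s*ε) ≤ Real.exp (s*ε) * Real.exp (-(s*ε)) :=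
            mul_le_mul_of_nonneg_left h1 (Real.exp_nonneg _)
        _ = 1 := by rw [← Real.exp_add]; simp
    have h3 : q = Real.exp (s*ε) * (1 - s*ε) * (1 - s^2/2) := by
      rw [hqdef, hCdef, hθεT, hcdef]; ring
    have h5 : q ≤ 1 - s^2/2 := by
      rw [h3]
      calc Real.exp (s*ε) * (1 - s*ε) * (1 - s^2/2) ≤ 1 * (1 - s^2/2) :=
            mul_le_mul_of_nonneg_right h2 hf2
        _ = 1 - s^2/2 := by ring
    have h6 : 0 < s^2 := pow_pos hspos 2
    linarith
  refine ⟨C, q, T, hC0, hq0, hq1, hT1, fun n => ?_⟩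
  have step1 := chernoff (η := η) (Q := Q) hηnn hQnn a (θ := θ) (ε := ε) hθpos.le n
  have step2 : ∑ x, η x * gt Q a θ n x ≤ c ^ (n / T) := by
    calc ∑ x, η x * gt Q a θ n x ≤ ∑ x, η x * c ^ (n / T) :=
          Finset.sum_le_sum fun x _ => mul_le_mul_of_nonneg_left
            (gt_div_bound hQnn hQ a hθpos.le hc0 hgc n x) (hηnn x)
      _ = c ^ (n / T) := by rw [← Finset.sum_mul, hηsum, one_mul]
  have hsumnn : 0 ≤ ∑ x, η x * gt Q a θ n x :=
    Finset.sum_nonneg fun x _ => mul_nonneg (hηnn x) (gt_nonneg hQnn a θ n x)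
  have hexpn : Real.exp (θ * (ε * n)) ≤ C * C ^ (n / T) := by
    have h1 : n < (n / T + 1) * T := by
      have h2 := Nat.mod_lt n hTposn
      calc n = T * (n / T) + n % T := (Nat.div_add_mod n T).symm
        _ < T * (n / T) + T := Nat.add_lt_add_left h2 _
        _ = (n / T + 1) * T := by ring
    have hle : (n:ℝ) ≤ ((n / T : ℕ):ℝ) * T + T := by
      have h4 : ((n:ℕ):ℝ) ≤ (((n / T + 1) * T : ℕ):ℝ) := by exact_mod_cast h1.le
      push_cast at h4
      linarith
    have h5 : θ * (ε * n) ≤ ((n / T + 1 : ℕ):ℝ) * (θ * (ε * T)) := by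
      have h6 : θ * (ε * n) ≤ θ * (ε * (((n / T : ℕ):ℝ) * T + T)) := by
        apply mul_le_mul_of_nonneg_left _ hθpos.le
        exact mul_le_mul_of_nonneg_left hle hε
      calc θ * (ε * n) ≤ θ * (ε * (((n / T : ℕ):ℝ) * T + T)) := h6
        _ = ((n / T + 1 : ℕ):ℝ) * (θ * (ε * T)) := by push_cast; ring
    calc Real.exp (θ * (ε * n)) ≤ Real.exp (((n / T + 1 : ℕ):ℝ) * (θ * (ε * T))) :=
          Real.exp_le_exp.mpr h5
      _ = C ^ (n / T + 1) := by
          rw [hCdef, ← Real.exp_nat_mul]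
      _ = C * C ^ (n / T) := by rw [pow_succ]; ring
  calc ∑ f ∈ Finset.univ.filter (fun f : Fin (n + 1) → A => NfinR a n f ≤ ε * n),
        Wfin η Q n f
      ≤ Real.exp (θ * (ε * n)) * ∑ x, η x * gt Q a θ n x := step1
    _ ≤ (C * C ^ (n / T)) * c ^ (n / T) := by
        apply mul_le_mul hexpn step2 hsumnn
        exact mul_nonneg hC0 (pow_nonneg hC0 _)
    _ = C * q ^ (n / T) := by
        have hqq : q ^ (n / T) = C ^ (n / T) * c ^ (n / T) := by rw [hqdef, mul_pow]
        rw [hqq]; ring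

lemma tendsto_aux (β C q : ℝ) (T : ℕ) (hC : 0 ≤ C) (hq0 : 0 ≤ q) (hq1 : q < 1) (hT : 1 ≤ T) :
    Tendsto (fun n : ℕ => (n:ℝ) ^ β * (C * q ^ (n / T))) atTop (nhds 0) := by
  set q' : ℝ := max q (1/2) with hq'def
  have hq'0 : 0 < q' := lt_of_lt_of_le (by norm_num) (le_max_right _ _)
  have hq'1 : q' < 1 := max_lt hq1 (by norm_num)
  have hq'q : q ≤ q' := le_max_left _ _
  have hTpos : (0:ℝ) < T := by exact_mod_cast hT
  set ρ := q' ^ ((1:ℝ)/T) with hρdef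
  have hρpos : 0 < ρ := Real.rpow_pos_of_pos hq'0 _
  have hρ1 : ρ < 1 := Real.rpow_lt_one hq'0.le hq'1 (by positivity)
  have hbound : ∀ n : ℕ, q ^ (n / T) ≤ q'⁻¹ * ρ ^ n := by
    intro n
    have h1 : q ^ (n / T) ≤ q' ^ (n / T) := pow_le_pow_left₀ hq0 hq'q _
    have h2 : ((n:ℝ)/T - 1) ≤ ((n / T : ℕ):ℝ) := by
      have hnat : n < (n / T + 1) * T := by
        have hm := Nat.mod_lt n (show 0 < T from hT)
        calc n = T * (n / T) + n % T := (Nat.div_add_mod n T).symm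
          _ < T * (n / T) + T := Nat.add_lt_add_left hm _
          _ = (n / T + 1) * T := by ring
      have hcast : (n:ℝ) < ((n / T : ℕ):ℝ)*T + T := by
        have h4 : ((n:ℕ):ℝ) < (((n / T + 1) * T : ℕ):ℝ) := by exact_mod_cast hnat
        push_cast at h4
        linarith
      rw [sub_le_iff_le_add, div_le_iff₀ hTpos]
      nlinarith
    have h4 : q' ^ ((n / T : ℕ)) = q' ^ (((n / T : ℕ)):ℝ) := (Real.rpow_natCast q' _).symm
    have h5 : q' ^ (((n / T : ℕ)):ℝ) ≤ q' ^ ((n:ℝ)/T - 1) :=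
      Real.rpow_le_rpow_of_exponent_ge hq'0 hq'1.le h2
    have h6 : q' ^ ((n:ℝ)/T - 1) = q'⁻¹ * ρ ^ n := by
      rw [Real.rpow_sub hq'0, Real.rpow_one]
      rw [hρdef, ← Real.rpow_natCast (q' ^ ((1:ℝ)/T)) n, ← Real.rpow_mul hq'0.le]
      rw [show (1:ℝ)/T * n = (n:ℝ)/T from by ring]
      ring
    calc q ^ (n / T) ≤ q' ^ (n / T) := h1
      _ = q' ^ (((n / T : ℕ)):ℝ) := h4
      _ ≤ q' ^ ((n:ℝ)/T - 1) := h5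
      _ = q'⁻¹ * ρ ^ n := h6
  have hlim : Tendsto (fun n : ℕ => (n:ℝ) ^ β * ρ ^ n) atTop (nhds 0) := by
    have hlog : Real.log ρ < 0 := Real.log_neg hρpos hρ1
    have h1 := tendsto_rpow_mul_exp_neg_mul_atTop_nhds_zero β (-Real.log ρ) (by linarith)
    have h2 := h1.comp tendsto_natCast_atTop_atTop
    have heq : (fun n : ℕ => (n:ℝ)^β * ρ^n)
        = (fun x : ℝ => x ^ β * Real.exp (-(-Real.log ρ) * x)) ∘ (fun n : ℕ => (n:ℝ)) := by
      funext n
      simp only [Function.comp_apply]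
      congr 1
      rw [neg_neg, mul_comm (Real.log ρ) ((n:ℕ):ℝ), Real.exp_nat_mul, Real.exp_log hρpos]
    rw [heq]
    exact h2
  have hfinal : Tendsto (fun n : ℕ => (C * q'⁻¹) * ((n:ℝ)^β * ρ^n)) atTop (nhds 0) := by
    simpa using hlim.const_mul (C * q'⁻¹)
  apply squeeze_zero _ _ hfinal
  · intro n
    exact mul_nonneg (Real.rpow_nonneg (Nat.cast_nonneg n) β)
      (mul_nonneg hC (pow_nonneg hq0 _))
  · intro n
    calc (n:ℝ)^β * (C * q^(n / T)) ≤ (n:ℝ)^β * (C * (q'⁻¹ * ρ^n)) := by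
          apply mul_le_mul_of_nonneg_left _ (Real.rpow_nonneg (Nat.cast_nonneg n) β)
          exact mul_le_mul_of_nonneg_left (hbound n) hC
      _ = (C * q'⁻¹) * ((n:ℝ)^β * ρ^n) := by ring

lemma split_by_last (hηnn : ∀ x, 0 ≤ η x) (hQnn : ∀ x y, 0 ≤ Q x y) (n : ℕ) {ε : ℝ} :
    ∑ f ∈ Finset.univ.filter
        (fun f : Fin (n + 1) → A =>
          (∑ i : Fin n, if f i.castSucc = f (Fin.last n) then (1:ℝ) else 0) ≤ ε * n),
      Wfin η Q n f
    ≤ ∑ a : A, ∑ f ∈ Finset.univ.filter (fun f : Fin (n + 1) → A => NfinR a n f ≤ ε * n),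
        Wfin η Q n f := by
  set s := Finset.univ.filter
      (fun f : Fin (n + 1) → A =>
        (∑ i : Fin n, if f i.castSucc = f (Fin.last n) then (1:ℝ) else 0) ≤ ε * n) with hsdef
  rw [← Finset.sum_fiberwise s (fun f => f (Fin.last n)) (Wfin η Q n)]
  apply Finset.sum_le_sum
  intro a _
  apply Finset.sum_le_sum_of_subset_of_nonneg
  · intro f hf
    rw [Finset.mem_filter] at hf
    obtain ⟨hfs, hlast⟩ := hf
    rw [hsdef, Finset.mem_filter] at hfs
    rw [Finset.mem_filter]
    refine ⟨Finset.mem_univ f, ?_⟩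
    unfold NfinR
    rw [← hlast]
    exact hfs.2
  · intro f _ _
    exact Wfin_nonneg hηnn hQnn n f

section Measure
variable {Ω : Type*} [MeasurableSpace Ω]

lemma cover_bound (P : Measure Ω) [IsProbabilityMeasure P] (X : ℕ → Ω → A)
    (hlaw : IsRealChainLaw P X η Q) (hηnn : ∀ x, 0 ≤ η x) (hQnn : ∀ x y, 0 ≤ Q x y)
    (n : ℕ) (p : (Fin (n + 1) → A) → Prop) [DecidablePred p] (E : Set Ω)
    (hp : ∀ ω ∈ E, p (fun i : Fin (n + 1) => X i.1 ω)) :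
    (P E).toReal ≤ ∑ f ∈ Finset.univ.filter p, Wfin η Q n f := by
  set wext : (Fin (n + 1) → A) → ℕ → A :=
    fun f i => if h : i < n + 1 then f ⟨i, h⟩ else f 0 with hwext
  have hWext : ∀ f : Fin (n + 1) → A,
      η (wext f 0) * ∏ i ∈ Finset.range n, Q (wext f i) (wext f (i + 1)) = Wfin η Q n f := by
    intro f
    unfold Wfin
    have h0 : wext f 0 = f 0 := by
      rw [hwext]
      simp only
      rw [dif_pos (by omega : (0:ℕ) < n + 1)]
      exact congrArg f (Fin.ext (by simp))
    congr 1
    · rw [← Fin.prod_univ_eq_prod_range (fun i => Q (wext f i) (wext f (i + 1))) n]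
      apply Finset.prod_congr rfl
      intro i _
      have hi1 : ((i:ℕ)) < n + 1 := by omega
      have hi2 : ((i:ℕ)) + 1 < n + 1 := by omega
      have h1 : wext f (i:ℕ) = f i.castSucc := by
        rw [hwext]
        simp only
        rw [dif_pos hi1]
        exact congrArg f (Fin.ext (by simp))
      have h2 : wext f ((i:ℕ) + 1) = f i.succ := by
        rw [hwext]
        simp only
        rw [dif_pos hi2]
        exact congrArg f (Fin.ext (by simp))
      rw [h1, h2]
  have hsub : E ⊆ ⋃ f ∈ Finset.univ.filter p,
      ⋂ i ∈ Finset.range (n + 1), {ω | X i ω = wext f i} := by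
    intro ω hω
    have hmem : (fun i : Fin (n + 1) => X i.1 ω) ∈ Finset.univ.filter p :=
      Finset.mem_filter.mpr ⟨Finset.mem_univ _, hp ω hω⟩
    refine Set.mem_biUnion hmem ?_
    refine Set.mem_iInter₂.mpr fun i hi => ?_
    rw [Finset.mem_range] at hi
    show X i ω = wext (fun j : Fin (n + 1) => X j.1 ω) i
    rw [hwext]
    simp only
    rw [dif_pos hi]
  have hle : P E ≤ ∑ f ∈ Finset.univ.filter p, ENNReal.ofReal (Wfin η Q n f) := by
    calc P E ≤ P (⋃ f ∈ Finset.univ.filter p,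
          ⋂ i ∈ Finset.range (n + 1), {ω | X i ω = wext f i}) := measure_mono hsub
      _ ≤ ∑ f ∈ Finset.univ.filter p,
            P (⋂ i ∈ Finset.range (n + 1), {ω | X i ω = wext f i}) :=
          measure_biUnion_finset_le _ _
      _ = ∑ f ∈ Finset.univ.filter p, ENNReal.ofReal (Wfin η Q n f) := by
          apply Finset.sum_congr rfl
          intro f _
          rw [hlaw n (wext f), hWext f]
  have hnn : 0 ≤ ∑ f ∈ Finset.univ.filter p, Wfin η Q n f :=
    Finset.sum_nonneg fun f _ => Wfin_nonneg hηnn hQnn n f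
  apply ENNReal.toReal_le_of_le_ofReal hnn
  rw [ENNReal.ofReal_sum_of_nonneg (fun f _ => Wfin_nonneg hηnn hQnn n f)]
  exact hle

end Measure
end LnAux


/-- Lemma 6.1, part 1: for an irreducible aperiodic Markov chain on a
finite state space with stationary distribution `π`, for any `β ∈ ℝ`, any
`ε ∈ [0, π_∧)`, any `r > 0`, and any initial distribution `η`:
`n^β P_η{L_n/n ≤ ε} → 0` and `n^β P_η{L_n = r} → 0`. (Indexed from 0:
`L_n = Σ_{i<n} 1{X_i = X_n}`.) -/
theorem finite_chain_Ln_superpolynomial {A : Type*} [Fintype A] [Nonempty A] [DecidableEq A]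
    {Ω : Type*} [MeasurableSpace Ω] (P : Measure Ω) [IsProbabilityMeasure P]
    (X : ℕ → Ω → A)
    (Q : A → A → ℝ) (π η : A → ℝ)
    (hQnn : ∀ x y, 0 ≤ Q x y) (hQ : ∀ x, ∑ y, Q x y = 1)
    (hprim : ∃ t : ℕ, ∀ a b, 0 < mpow Q t a b)
    (hπpos : ∀ x, 0 < π x) (hπsum : ∑ x, π x = 1)
    (hstat : ∀ x, ∑ y, π y * Q y x = π x)
    (hηnn : ∀ a, 0 ≤ η a) (hηsum : ∑ a, η a = 1)
    (hlaw : IsRealChainLaw P X η Q)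
    (β : ℝ) (ε : ℝ) (hε : 0 ≤ ε) (hεπ : ∀ a, ε < π a) (r : ℕ) (hrpos : 0 < r) :
    Tendsto (fun n : ℕ => (n : ℝ) ^ β *
        (P {ω | ((∑ i ∈ Finset.range n, if X i ω = X n ω then 1 else 0 : ℕ) : ℝ) ≤
          ε * n}).toReal) atTop (nhds 0) ∧
      Tendsto (fun n : ℕ => (n : ℝ) ^ β *
        (P {ω | (∑ i ∈ Finset.range n, if X i ω = X n ω then 1 else 0 : ℕ) = r}).toReal)
        atTop (nhds 0) := by
  have KEY : ∀ ε' : ℝ, 0 ≤ ε' → (∀ a, ε' < π a) →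
      Tendsto (fun n : ℕ => (n : ℝ) ^ β *
        (P {ω | ((∑ i ∈ Finset.range n, if X i ω = X n ω then 1 else 0 : ℕ) : ℝ) ≤
          ε' * n}).toReal) atTop (nhds 0) := by
    intro ε' hε'0 hε'π
    have hKa : ∀ a : A, ∃ (C q : ℝ) (T : ℕ), 0 ≤ C ∧ 0 ≤ q ∧ q < 1 ∧ 1 ≤ T ∧
        ∀ n : ℕ, ∑ f ∈ Finset.univ.filter
            (fun f : Fin (n + 1) → A => LnAux.NfinR a n f ≤ ε' * n),
          LnAux.Wfin η Q n f ≤ C * q ^ (n / T) :=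
      fun a => LnAux.key_bound hQnn hQ hprim hπpos hπsum hstat hηnn hηsum a hε'0 (hε'π a)
    choose C q T hC hq0 hq1 hT hbd using hKa
    have hcover : ∀ n : ℕ,
        (P {ω | ((∑ i ∈ Finset.range n, if X i ω = X n ω then 1 else 0 : ℕ) : ℝ) ≤
            ε' * n}).toReal ≤ ∑ a : A, C a * q a ^ (n / T a) := by
      intro n
      have h1 := LnAux.cover_bound (η := η) (Q := Q) P X hlaw hηnn hQnn n
        (fun f : Fin (n + 1) → A =>
          (∑ i : Fin n, if f i.castSucc = f (Fin.last n) then (1:ℝ) else 0) ≤ ε' * n)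
        {ω | ((∑ i ∈ Finset.range n, if X i ω = X n ω then 1 else 0 : ℕ) : ℝ) ≤ ε' * n}
        (by
          intro ω hω
          have hω' : ((∑ i ∈ Finset.range n, if X i ω = X n ω then 1 else 0 : ℕ) : ℝ) ≤
              ε' * n := hω
          have hcast : ((∑ i ∈ Finset.range n, if X i ω = X n ω then 1 else 0 : ℕ) : ℝ)
              = ∑ i ∈ Finset.range n, (if X i ω = X n ω then (1:ℝ) else 0) := by
            push_cast
            exact Finset.sum_congr rfl fun i _ => by split <;> simp
          have hfin : ∑ i : Fin n,
              (if (fun j : Fin (n + 1) => X j.1 ω) i.castSucc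
                  = (fun j : Fin (n + 1) => X j.1 ω) (Fin.last n) then (1:ℝ) else 0)
              = ∑ i ∈ Finset.range n, (if X i ω = X n ω then (1:ℝ) else 0) := by
            rw [← Fin.sum_univ_eq_sum_range (fun i => if X i ω = X n ω then (1:ℝ) else 0) n]
            apply Finset.sum_congr rfl
            intro i _
            simp [Fin.coe_castSucc, Fin.val_last]
          show ∑ i : Fin n,
              (if (fun j : Fin (n + 1) => X j.1 ω) i.castSucc
                  = (fun j : Fin (n + 1) => X j.1 ω) (Fin.last n) then (1:ℝ) else 0) ≤ ε' * n
          rw [hfin, ← hcast]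
          exact hω')
      refine h1.trans ((LnAux.split_by_last hηnn hQnn n).trans ?_)
      exact Finset.sum_le_sum fun a _ => hbd a n
    apply squeeze_zero (g := fun n : ℕ => (n:ℝ)^β * ∑ a : A, C a * q a ^ (n / T a))
    · intro n
      exact mul_nonneg (Real.rpow_nonneg (Nat.cast_nonneg n) β) ENNReal.toReal_nonneg
    · intro n
      exact mul_le_mul_of_nonneg_left (hcover n) (Real.rpow_nonneg (Nat.cast_nonneg n) β)
    · have heq : (fun n : ℕ => (n:ℝ)^β * ∑ a : A, C a * q a ^ (n / T a))
          = fun n : ℕ => ∑ a : A, (n:ℝ)^β * (C a * q a ^ (n / T a)) := by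
        funext n; rw [Finset.mul_sum]
      rw [heq]
      have h0 := tendsto_finset_sum (Finset.univ : Finset A)
        (f := fun a (n : ℕ) => (n:ℝ)^β * (C a * q a ^ (n / T a))) (a := fun _ => (0:ℝ))
        (fun a _ => LnAux.tendsto_aux β (C a) (q a) (T a) (hC a) (hq0 a) (hq1 a) (hT a))
      simpa using h0
  constructor
  · exact KEY ε hε hεπ
  · set m := Finset.univ.inf' Finset.univ_nonempty π with hm
    have hmpos : 0 < m := by
      rw [hm, Finset.lt_inf'_iff]
      exact fun x _ => hπpos x
    have hm_le : ∀ x, m ≤ π x := fun x => Finset.inf'_le _ (Finset.mem_univ x)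
    have h2 := KEY (m/2) (by linarith) (fun x => lt_of_lt_of_le (by linarith) (hm_le x))
    apply squeeze_zero' (Filter.Eventually.of_forall fun n =>
      mul_nonneg (Real.rpow_nonneg (Nat.cast_nonneg n) β) ENNReal.toReal_nonneg) _ h2
    rw [Filter.eventually_atTop]
    refine ⟨Nat.ceil ((r:ℝ)/(m/2)), fun n hn => ?_⟩
    apply mul_le_mul_of_nonneg_left _ (Real.rpow_nonneg (Nat.cast_nonneg n) β)
    apply ENNReal.toReal_mono (measure_ne_top P _)
    apply measure_mono
    intro ω hω
    have hω' : (∑ i ∈ Finset.range n, if X i ω = X n ω then 1 else 0 : ℕ) = r := hω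
    show ((∑ i ∈ Finset.range n, if X i ω = X n ω then 1 else 0 : ℕ) : ℝ) ≤ (m/2) * n
    rw [hω']
    have h3 : ((r:ℝ)/(m/2)) ≤ n := le_trans (Nat.le_ceil _) (by exact_mod_cast hn)
    rw [div_le_iff₀ (by linarith : (0:ℝ) < m/2)] at h3
    linarith
end

section
/- Fix α ∈ (0,1) and slowly varying ℓ, and let P = (p_k) be a probability distribution on ℕ_+ whose counting function satisfies lim_{ε→0} ν(ε)/(ε^{−α}ℓ(1/ε)) = 0. Then for all r ≥ 0: lim_{n→∞} C(n,r) Σ_{k=1}^∞ p_k^{r+1}(1 − p_k)^{n−r} / ( n^{α−1} ℓ(n) ) = 0. -/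
open Filter

/-- `ℓ` is slowly varying at `+∞`: `ℓ(cx)/ℓ(x) → 1` for every `c > 0`. -/
def SlowlyVarying (ℓ : ℝ → ℝ) : Prop :=
  ∀ c : ℝ, 0 < c → Tendsto (fun x => ℓ (c * x) / ℓ x) atTop (nhds 1)

open scoped Classical in
/-- The (real-valued) counting function `ν(ε) = Σ_k 1{p_k ≥ ε}` of a distribution `p`. -/
noncomputable def nuR (p : ℕ → ℝ) (ε : ℝ) : ℝ :=
  ∑' k, if ε ≤ p k then (1 : ℝ) else 0

open scoped Classical in
lemma summable_ind (p : ℕ → ℝ) (hpnn : ∀ k, 0 ≤ p k) (hs : Summable p) {ε : ℝ} (hε : 0 < ε) :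
    Summable (fun k => if ε ≤ p k then (1 : ℝ) else 0) := by
  refine Summable.of_nonneg_of_le (fun k => ?_) (fun k => ?_) (hs.mul_left ε⁻¹)
  · split_ifs <;> norm_num
  · split_ifs with h
    · rw [show (1:ℝ) = ε⁻¹ * ε from by field_simp]
      exact mul_le_mul_of_nonneg_left h (by positivity)
    · exact mul_nonneg (by positivity) (hpnn k)

lemma summable_min (p : ℕ → ℝ) (hpnn : ∀ k, 0 ≤ p k) (hs : Summable p) {ε : ℝ} (hε : 0 ≤ ε) :
    Summable (fun k => min (p k) ε) :=
  hs.of_nonneg_of_le (fun k => le_min (hpnn k) hε) (fun k => min_le_left _ _)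

lemma abs_chain {ℓ : ℝ → ℝ} {K X1 : ℝ} (hK : 0 ≤ K) (hX1 : 1 ≤ X1)
    (h : ∀ x, X1 ≤ x → |ℓ (2 * x)| ≤ K * |ℓ x|) :
    ∀ (m : ℕ) (x : ℝ), X1 ≤ x → |ℓ (2 ^ m * x)| ≤ K ^ m * |ℓ x| := by
  intro m
  induction m with
  | zero => intro x _; simp
  | succ m ih =>
    intro x hx
    have hx0 : 0 ≤ x := le_trans (by linarith) hx
    have hge : X1 ≤ 2 ^ m * x :=
      le_trans hx (le_mul_of_one_le_left hx0 (one_le_pow₀ one_le_two))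
    have h2 : (2:ℝ) ^ (m+1) * x = 2 * (2 ^ m * x) := by ring
    calc |ℓ (2 ^ (m+1) * x)| = |ℓ (2 * (2 ^ m * x))| := by rw [h2]
      _ ≤ K * |ℓ (2 ^ m * x)| := h _ hge
      _ ≤ K * (K ^ m * |ℓ x|) := mul_le_mul_of_nonneg_left (ih x hx) hK
      _ = K ^ (m+1) * |ℓ x| := by ring

lemma xexp_le_min {x t : ℝ} (hx : 0 ≤ x) (ht : 0 < t) :
    x * Real.exp (-(t * x)) ≤ min x t⁻¹ := by
  rcases le_or_gt x t⁻¹ with h | h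
  · rw [min_eq_left h]
    have he : Real.exp (-(t * x)) ≤ 1 := by
      rw [show (1:ℝ) = Real.exp 0 from (Real.exp_zero).symm]
      exact Real.exp_le_exp.2 (by nlinarith)
    exact mul_le_of_le_one_right hx he
  · rw [min_eq_right h.le]
    rw [Real.exp_neg, ← div_eq_mul_inv, inv_eq_one_div, div_le_div_iff₀ (Real.exp_pos _) ht]
    have := Real.add_one_le_exp (t * x)
    nlinarith

lemma term_bound {x : ℝ} (hx0 : 0 ≤ x) (hx1 : x ≤ 1) {n r : ℕ} (hnr : 2 * r ≤ n) (hn : 0 < n) :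
    (n.choose r : ℝ) * (x ^ (r + 1) * (1 - x) ^ (n - r)) ≤ 4 ^ r * min x (4 / n) := by
  have hn' : (0:ℝ) < n := by exact_mod_cast hn
  have hrn : r ≤ n := by omega
  have h1x : 0 ≤ 1 - x := by linarith
  have hfac : (0:ℝ) < (r.factorial : ℝ) := by exact_mod_cast r.factorial_pos
  have h1 : (1 - x) ^ (n - r) ≤ Real.exp (-((n:ℝ)/2 * x)) := by
    have hle : (1 - x) ≤ Real.exp (-x) := by linarith [Real.add_one_le_exp (-x)]
    have hcast : ((n - r : ℕ) : ℝ) = (n:ℝ) - r := by rw [Nat.cast_sub hrn]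
    calc (1-x) ^ (n-r) ≤ (Real.exp (-x)) ^ (n-r) := pow_le_pow_left₀ h1x hle _
      _ = Real.exp (((n-r : ℕ):ℝ) * (-x)) := by rw [Real.exp_nat_mul]
      _ ≤ Real.exp (-((n:ℝ)/2 * x)) := by
          apply Real.exp_le_exp.2
          rw [hcast]
          have hr2 : (r:ℝ) ≤ (n:ℝ)/2 := by
            have h2r : ((2*r : ℕ):ℝ) ≤ (n:ℝ) := by exact_mod_cast hnr
            push_cast at h2r; linarith
          nlinarith
  have h2 : x ^ r * Real.exp (-((n:ℝ)/4 * x)) ≤ (r.factorial : ℝ) * (4/(n:ℝ)) ^ r := by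
    have hy : (0:ℝ) ≤ (n:ℝ)/4 * x := by positivity
    have hpf := Real.pow_div_factorial_le_exp ((n:ℝ)/4*x) hy r
    have hyr : ((n:ℝ)/4 * x) ^ r ≤ (r.factorial : ℝ) * Real.exp ((n:ℝ)/4 * x) := by
      rw [div_le_iff₀ hfac] at hpf
      linarith [hpf]
    have hxr : x ^ r = (4/(n:ℝ)) ^ r * ((n:ℝ)/4 * x) ^ r := by
      rw [← mul_pow]; congr 1; field_simp
    have hEne : Real.exp ((n:ℝ)/4 * x) ≠ 0 := (Real.exp_pos _).ne'
    rw [hxr]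
    calc (4/(n:ℝ))^r * ((n:ℝ)/4*x)^r * Real.exp (-((n:ℝ)/4*x))
        ≤ (4/(n:ℝ))^r * ((r.factorial:ℝ) * Real.exp ((n:ℝ)/4*x)) * Real.exp (-((n:ℝ)/4*x)) := by
          apply mul_le_mul_of_nonneg_right
            (mul_le_mul_of_nonneg_left hyr (by positivity)) (Real.exp_pos _).le
      _ = (r.factorial:ℝ) * (4/(n:ℝ))^r := by
          rw [Real.exp_neg]; field_simp
  have hchoose : (n.choose r : ℝ) ≤ (n:ℝ)^r / (r.factorial:ℝ) := Nat.choose_le_pow_div r n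
  have hEsplit : Real.exp (-((n:ℝ)/2 * x)) =
      Real.exp (-((n:ℝ)/4 * x)) * Real.exp (-((n:ℝ)/4 * x)) := by
    rw [← Real.exp_add]; ring_nf
  have hE0 : 0 ≤ Real.exp (-((n:ℝ)/4 * x)) := (Real.exp_pos _).le
  calc (n.choose r : ℝ) * (x ^ (r + 1) * (1 - x) ^ (n - r))
      ≤ ((n:ℝ)^r / (r.factorial:ℝ)) * (x ^ (r+1) * Real.exp (-((n:ℝ)/2 * x))) := by
        apply mul_le_mul hchoose
          (mul_le_mul_of_nonneg_left h1 (pow_nonneg hx0 _))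
          (mul_nonneg (pow_nonneg hx0 _) (pow_nonneg h1x _)) (by positivity)
    _ = ((n:ℝ)^r / (r.factorial:ℝ)) *
        ((x^r * Real.exp (-((n:ℝ)/4 * x))) * (x * Real.exp (-((n:ℝ)/4 * x)))) := by
        rw [hEsplit]; ring
    _ ≤ ((n:ℝ)^r / (r.factorial:ℝ)) *
        (((r.factorial:ℝ) * (4/(n:ℝ))^r) * (x * Real.exp (-((n:ℝ)/4 * x)))) := by
        apply mul_le_mul_of_nonneg_left _ (by positivity)
        exact mul_le_mul_of_nonneg_right h2 (mul_nonneg hx0 hE0)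
    _ = 4^r * (x * Real.exp (-((n:ℝ)/4 * x))) := by
        have hd : (4/(n:ℝ))^r = 4^r / (n:ℝ)^r := div_pow 4 _ r
        rw [hd]; field_simp
    _ ≤ 4^r * min x (4/(n:ℝ)) := by
        apply mul_le_mul_of_nonneg_left _ (by positivity)
        have hm := xexp_le_min hx0 (show (0:ℝ) < (n:ℝ)/4 by positivity)
        rw [inv_div] at hm
        exact hm

/-- Proposition A.2 for α ∈ (0,1): if `ν(ε)/(ε^{−α}ℓ(1/ε)) → 0` as
`ε → 0⁺` with `α ∈ (0,1)` and `ℓ` slowly varying, then for all `r ≥ 0`,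
`binom(n,r) Σ_k p_k^{r+1}(1 − p_k)^{n−r} / (n^{α−1}ℓ(n)) → 0`. -/
theorem occupancy_RV_vanishing (p : ℕ → ℝ) (hpnn : ∀ k, 0 ≤ p k) (hp : HasSum p 1)
    (α : ℝ) (hα : α ∈ Set.Ioo (0 : ℝ) 1)
    (ℓ : ℝ → ℝ) (hsv : SlowlyVarying ℓ)
    (hν : Tendsto (fun ε : ℝ => nuR p ε / (ε ^ (-α) * ℓ (1 / ε)))
      (nhdsWithin 0 (Set.Ioi 0)) (nhds 0))
    (r : ℕ) :
    Tendsto (fun n : ℕ =>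
        ((n.choose r : ℝ) * ∑' k, p k ^ (r + 1) * (1 - p k) ^ (n - r)) /
          ((n : ℝ) ^ (α - 1) * ℓ n))
      atTop (nhds 0) := by
  obtain ⟨hα0, hα1⟩ := hα
  have hsum : Summable p := hp.summable
  have hple : ∀ k, p k ≤ 1 := fun k => le_hasSum hp k (fun j _ => hpnn j)
  -- ℓ is eventually nonzero
  have hX0ev : ∀ᶠ x : ℝ in atTop, ℓ x ≠ 0 := by
    have h1 := hsv 1 one_pos
    simp only [one_mul] at h1
    have h2 := (Metric.tendsto_nhds.mp h1) 1 one_pos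
    filter_upwards [h2] with x hx h0
    rw [h0] at hx
    simp [Real.dist_eq] at hx
  obtain ⟨X0, hX0⟩ := eventually_atTop.mp hX0ev
  -- generic ratio bound
  have hgen : ∀ c M : ℝ, 0 < c → 1 < M → ∀ᶠ x : ℝ in atTop, |ℓ (c * x)| ≤ M * |ℓ x| := by
    intro c M hc hM
    have h2 := hsv c hc
    have h3 := (Metric.tendsto_nhds.mp h2) (M - 1) (by linarith)
    filter_upwards [h3, hX0ev] with x hx hx0
    rw [Real.dist_eq] at hx
    have habs : |ℓ (c*x) / ℓ x| ≤ M := by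
      calc |ℓ (c*x)/ℓ x| = |ℓ (c*x)/ℓ x - 1 + 1| := by ring_nf
        _ ≤ |ℓ (c*x)/ℓ x - 1| + |(1:ℝ)| := abs_add_le _ _
        _ ≤ M := by rw [abs_one]; linarith
    calc |ℓ (c*x)| = |ℓ (c*x)/ℓ x| * |ℓ x| := by rw [← abs_mul, div_mul_cancel₀ _ hx0]
      _ ≤ M * |ℓ x| := mul_le_mul_of_nonneg_right habs (abs_nonneg _)
  -- constants
  set c2 : ℝ := (2:ℝ) ^ (1 - α) with hc2def
  have hc2 : 1 < c2 := by
    rw [hc2def, show (1:ℝ) = (2:ℝ) ^ (0:ℝ) from (Real.rpow_zero 2).symm]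
    exact Real.rpow_lt_rpow_of_exponent_lt one_lt_two (by linarith)
  set K : ℝ := (1 + c2)/2 with hKdef
  have hK1 : 1 < K := by rw [hKdef]; linarith
  have hKc2 : K < c2 := by rw [hKdef]; linarith
  set β : ℝ := (2:ℝ) ^ (α-1) * K with hβdef
  have h2a : (2:ℝ) ^ (α-1) = c2⁻¹ := by
    rw [show α - 1 = -(1-α) by ring, Real.rpow_neg (by norm_num : (0:ℝ) ≤ 2), hc2def]
  have hβpos : 0 < β := mul_pos (Real.rpow_pos_of_pos two_pos _) (by linarith)
  have hβ1 : β < 1 := by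
    rw [hβdef, h2a, inv_mul_eq_div]
    exact (div_lt_one (by linarith)).mpr hKc2
  have h1β : 0 < 1 - β := by linarith
  -- doubling bound
  obtain ⟨X1', hX1'⟩ := eventually_atTop.mp (hgen 2 K two_pos hK1)
  set X1 : ℝ := max (max X1' X0) 1 with hX1def
  have hX1one : 1 ≤ X1 := le_max_right _ _
  have hX1pos : 0 < X1 := lt_of_lt_of_le one_pos hX1one
  have hX1dbl : ∀ x, X1 ≤ x → |ℓ (2*x)| ≤ K * |ℓ x| :=
    fun x hx => hX1' x (le_trans (le_trans (le_max_left _ _) (le_max_left _ _)) hx)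
  have hX1ne : ∀ x, X1 ≤ x → ℓ x ≠ 0 :=
    fun x hx => hX0 x (le_trans (le_trans (le_max_right _ _) (le_max_left _ _)) hx)
  have hchain : ∀ (m : ℕ) (x : ℝ), X1 ≤ x → |ℓ (2 ^ m * x)| ≤ K ^ m * |ℓ x| :=
    abs_chain (by linarith) hX1one hX1dbl
  -- KEY estimate on T ε = ∑' min (p k) ε
  have key : ∀ η : ℝ, 0 < η → ∃ ε1 : ℝ, 0 < ε1 ∧ ∀ ε : ℝ, 0 < ε → ε < ε1 →
      (∑' k, min (p k) ε) ≤ η * (1-β)⁻¹ * (ε ^ (1-α) * |ℓ (1/ε)|) := by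
    intro η hη
    obtain ⟨δ0, hδ0, hδ⟩ := Metric.tendsto_nhdsWithin_nhds.mp hν η hη
    refine ⟨min δ0 X1⁻¹, by positivity, ?_⟩
    intro ε hε hεlt
    have hεδ : ε < δ0 := lt_of_lt_of_le hεlt (min_le_left _ _)
    have hεX : ε < X1⁻¹ := lt_of_lt_of_le hεlt (min_le_right _ _)
    have hinv : ∀ u : ℝ, 0 < u → u ≤ ε → X1 ≤ 1/u := by
      intro u hu hle
      rw [le_div_iff₀ hu]
      have h' : u < X1⁻¹ := lt_of_le_of_lt hle hεX
      have h'' := mul_lt_mul_of_pos_left h' hX1pos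
      rw [mul_inv_cancel₀ hX1pos.ne'] at h''
      linarith
    have hN : ∀ u : ℝ, 0 < u → u ≤ ε → nuR p u ≤ η * (u ^ (-α) * |ℓ (1/u)|) := by
      intro u hu hle
      have hne : ℓ (1/u) ≠ 0 := hX1ne _ (hinv u hu hle)
      have hupos : 0 < u ^ (-α) := Real.rpow_pos_of_pos hu _
      have hd := hδ (Set.mem_Ioi.mpr hu)
        (by rw [Real.dist_eq, sub_zero, abs_of_pos hu]; exact lt_of_le_of_lt hle hεδ)
      rw [Real.dist_eq, sub_zero] at hd
      have hdenne : u ^ (-α) * ℓ (1/u) ≠ 0 := mul_ne_zero (ne_of_gt hupos) hne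
      have habs : |nuR p u| < η * |u ^ (-α) * ℓ (1/u)| := by
        rw [abs_div] at hd
        calc |nuR p u| = |nuR p u| / |u ^ (-α) * ℓ (1/u)| * |u ^ (-α) * ℓ (1/u)| := by
              field_simp
          _ < η * |u ^ (-α) * ℓ (1/u)| :=
              mul_lt_mul_of_pos_right hd (abs_pos.mpr hdenne)
      calc nuR p u ≤ |nuR p u| := le_abs_self _
        _ ≤ η * |u ^ (-α) * ℓ (1/u)| := habs.le
        _ = η * (u ^ (-α) * |ℓ (1/u)|) := by rw [abs_mul, abs_of_pos hupos]
    set Lv : ℝ := |ℓ (1/ε)| with hLvdef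
    have hLv : 0 ≤ Lv := abs_nonneg _
    -- one-step inequality
    have hstep : ∀ m : ℕ, (∑' k, min (p k) (ε / 2^m)) ≤
        (∑' k, min (p k) (ε / 2^(m+1))) + η * β^(m+1) * (ε ^ (1-α) * Lv) := by
      intro m
      set u : ℝ := ε / 2^(m+1) with hu_def
      have hupos : 0 < u := by positivity
      have huε : u ≤ ε := by
        rw [hu_def, div_le_iff₀ (by positivity)]
        nlinarith [one_le_pow₀ (one_le_two : (1:ℝ) ≤ 2) (n := m+1)]
      have h2u : ε / 2^m = 2 * u := by rw [hu_def]; field_simp; ring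
      have hterm : ∀ k, min (p k) (ε / 2^m) ≤
          min (p k) u + u * (if u ≤ p k then (1:ℝ) else 0) := by
        intro k
        rcases le_or_gt u (p k) with h | h
        · rw [if_pos h, min_eq_right h, mul_one, h2u]
          have : min (p k) (2*u) ≤ 2*u := min_le_right _ _
          linarith
        · rw [if_neg (not_le.mpr h), mul_zero, add_zero, min_eq_left h.le,
            min_eq_left (by linarith [le_trans h.le huε, h2u] : p k ≤ ε / 2^m)]
      have hsum1 : Summable (fun k => min (p k) (ε/2^m)) := summable_min p hpnn hsum (by positivity)
      have hsum2 : Summable (fun k => min (p k) u) := summable_min p hpnn hsum hupos.le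
      have hsum3 : Summable (fun k => u * (if u ≤ p k then (1:ℝ) else 0)) :=
        (summable_ind p hpnn hsum hupos).mul_left u
      have hbound : u * nuR p u ≤ η * β^(m+1) * (ε ^ (1-α) * Lv) := by
        have hb := hN u hupos huε
        have hu1 : u * u ^ (-α) = u ^ (1-α) := by
          rw [show (1-α) = 1 + (-α) by ring, Real.rpow_add hupos, Real.rpow_one]
        have h1u : 1/u = 2^(m+1) * (1/ε) := by rw [hu_def]; field_simp
        have hchain' : |ℓ (1/u)| ≤ K^(m+1) * Lv := by
          rw [h1u, hLvdef]
          exact hchain (m+1) (1/ε) (hinv ε hε le_rfl)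
        have hupow : u ^ (1-α) = ε ^ (1-α) * (c2⁻¹)^(m+1) := by
          rw [hu_def, Real.div_rpow hε.le (by positivity)]
          have hp2 : ((2:ℝ)^(m+1)) ^ (1-α) = c2^(m+1) := by
            rw [← Real.rpow_natCast (2:ℝ) (m+1), ← Real.rpow_mul (by norm_num : (0:ℝ) ≤ 2),
              mul_comm ((m+1:ℕ):ℝ) (1-α), Real.rpow_mul (by norm_num : (0:ℝ) ≤ 2),
              Real.rpow_natCast, hc2def]
          rw [hp2, div_eq_mul_inv, inv_pow]
        calc u * nuR p u ≤ u * (η * (u ^ (-α) * |ℓ (1/u)|)) :=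
              mul_le_mul_of_nonneg_left hb hupos.le
          _ = η * ((u * u ^ (-α)) * |ℓ (1/u)|) := by ring
          _ = η * (u ^ (1-α) * |ℓ (1/u)|) := by rw [hu1]
          _ ≤ η * (u ^ (1-α) * (K^(m+1) * Lv)) := by
              apply mul_le_mul_of_nonneg_left _ hη.le
              exact mul_le_mul_of_nonneg_left hchain' (Real.rpow_pos_of_pos hupos _).le
          _ = η * β^(m+1) * (ε ^ (1-α) * Lv) := by
              rw [hupow, hβdef, h2a, mul_pow]; ring
      calc (∑' k, min (p k) (ε/2^m))
          ≤ ∑' k, (min (p k) u + u * (if u ≤ p k then (1:ℝ) else 0)) :=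
            Summable.tsum_le_tsum hterm hsum1 (hsum2.add hsum3)
        _ = (∑' k, min (p k) u) + u * nuR p u := by
            rw [Summable.tsum_add hsum2 hsum3, tsum_mul_left]
            rfl
        _ ≤ (∑' k, min (p k) (ε / 2^(m+1))) + η * β^(m+1) * (ε ^ (1-α) * Lv) := by
            rw [← hu_def]
            exact add_le_add_right hbound _
    -- telescoping
    have htel : ∀ m : ℕ, (∑' k, min (p k) ε) ≤ (∑' k, min (p k) (ε / 2^m)) +
        (η * (ε ^ (1-α) * Lv)) * ∑ j ∈ Finset.range m, β^(j+1) := by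
      intro m
      induction m with
      | zero => simp
      | succ m ih =>
        calc (∑' k, min (p k) ε)
            ≤ (∑' k, min (p k) (ε / 2^m)) + (η * (ε ^ (1-α) * Lv)) *
                ∑ j ∈ Finset.range m, β^(j+1) := ih
          _ ≤ ((∑' k, min (p k) (ε / 2^(m+1))) + η * β^(m+1) * (ε ^ (1-α) * Lv)) +
                (η * (ε ^ (1-α) * Lv)) * ∑ j ∈ Finset.range m, β^(j+1) :=
              add_le_add_left (hstep m) _
          _ = (∑' k, min (p k) (ε / 2^(m+1))) + (η * (ε ^ (1-α) * Lv)) *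
                ∑ j ∈ Finset.range (m+1), β^(j+1) := by
              rw [Finset.sum_range_succ]; ring
    have hgeom : ∀ m : ℕ, (∑ j ∈ Finset.range m, β^(j+1)) ≤ (1-β)⁻¹ := by
      intro m
      calc (∑ j ∈ Finset.range m, β^(j+1)) ≤ ∑ j ∈ Finset.range m, β^j :=
          Finset.sum_le_sum (fun j _ =>
            pow_le_pow_of_le_one hβpos.le hβ1.le (by omega))
        _ ≤ ∑' j : ℕ, β^j := Summable.sum_le_tsum _ (fun j _ => pow_nonneg hβpos.le j)
            (summable_geometric_of_lt_one hβpos.le hβ1)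
        _ = (1-β)⁻¹ := tsum_geometric_of_lt_one hβpos.le hβ1
    have hlim : Tendsto (fun m : ℕ => (∑' k, min (p k) (ε / 2^m))) atTop (nhds 0) := by
      have h0 : Tendsto (fun m : ℕ => ε / 2^m) atTop (nhds 0) := by
        have := (tendsto_pow_atTop_nhds_zero_of_lt_one
          (by norm_num : (0:ℝ) ≤ 1/2) (by norm_num : (1/2:ℝ) < 1)).const_mul ε
        simpa [div_eq_mul_inv, ← inv_pow, one_div] using this
      have hdom := tendsto_tsum_of_dominated_convergence
        (f := fun (m : ℕ) (k : ℕ) => min (p k) (ε / 2^m)) (g := fun _ => (0:ℝ))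
        (bound := p) hsum
        (fun k => by
          have : Tendsto (fun m : ℕ => min (p k) (ε / 2^m)) atTop (nhds (min (p k) 0)) :=
            tendsto_const_nhds.min h0
          simpa [min_eq_right (hpnn k)] using this)
        (Eventually.of_forall (fun m k => by
          rw [Real.norm_eq_abs, abs_of_nonneg (le_min (hpnn k) (by positivity))]
          exact min_le_left _ _))
      simpa using hdom
    have hC : 0 ≤ η * (ε ^ (1-α) * Lv) := by positivity
    have hup : ∀ m : ℕ, (∑' k, min (p k) ε) ≤ (∑' k, min (p k) (ε / 2^m)) +
        (η * (ε ^ (1-α) * Lv)) * (1-β)⁻¹ :=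
      fun m => (htel m).trans (add_le_add_right (mul_le_mul_of_nonneg_left (hgeom m) hC) _)
    have hfin : (∑' k, min (p k) ε) ≤ 0 + (η * (ε ^ (1-α) * Lv)) * (1-β)⁻¹ :=
      ge_of_tendsto (hlim.add tendsto_const_nhds) (Eventually.of_forall hup)
    rw [zero_add] at hfin
    calc (∑' k, min (p k) ε) ≤ (η * (ε ^ (1-α) * Lv)) * (1-β)⁻¹ := hfin
      _ = η * (1-β)⁻¹ * (ε ^ (1-α) * Lv) := by ring
  -- final assembly
  rw [NormedAddCommGroup.tendsto_nhds_zero]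
  intro η' hη'
  have hinvβ : 0 < (1-β)⁻¹ := inv_pos.mpr h1β
  set Cco : ℝ := 4^r * (1-β)⁻¹ * ((4:ℝ) ^ (1-α)) * 2 with hCcodef
  have hCco : 0 < Cco := by
    apply mul_pos (mul_pos (mul_pos (by positivity) hinvβ) (by positivity)) two_pos
  set Cfull : ℝ := Cco + 1 with hCfulldef
  have hCfull : 0 < Cfull := by linarith
  set η : ℝ := η' / Cfull with hηdef
  have hηpos : 0 < η := by positivity
  obtain ⟨ε1, hε1pos, hkey⟩ := key η hηpos
  have hnat : Tendsto (fun n : ℕ => (n:ℝ)) atTop atTop := tendsto_natCast_atTop_atTop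
  have e1 : ∀ᶠ n : ℕ in atTop, X0 ≤ (n:ℝ) := hnat.eventually_ge_atTop X0
  have e2 : ∀ᶠ n : ℕ in atTop, |ℓ ((1/4) * (n:ℝ))| ≤ 2 * |ℓ (n:ℝ)| :=
    hnat.eventually (hgen (1/4) 2 (by norm_num) one_lt_two)
  have e3 : ∀ᶠ n : ℕ in atTop, 4 / (n:ℝ) < ε1 :=
    (tendsto_const_div_atTop_nhds_zero_nat 4).eventually (eventually_lt_nhds hε1pos)
  have e4 : ∀ᶠ n : ℕ in atTop, 2*r + 1 ≤ n := eventually_ge_atTop _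
  filter_upwards [e1, e2, e3, e4] with n h1 h2 h3 h4
  have hn0 : 0 < n := by omega
  have hnR : (0:ℝ) < n := by exact_mod_cast hn0
  have hrn : 2*r ≤ n := by omega
  have hℓn : ℓ (n:ℝ) ≠ 0 := hX0 _ h1
  have habsn : 0 < |ℓ (n:ℝ)| := abs_pos.mpr hℓn
  have hfnn : ∀ k, 0 ≤ p k ^ (r+1) * (1 - p k) ^ (n-r) :=
    fun k => mul_nonneg (pow_nonneg (hpnn k) _) (pow_nonneg (by linarith [hple k]) _)
  have hfle : ∀ k, p k ^ (r+1) * (1 - p k) ^ (n-r) ≤ p k := by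
    intro k
    calc p k ^ (r+1) * (1 - p k) ^ (n-r) ≤ p k ^ (r+1) * 1 :=
        mul_le_mul_of_nonneg_left
          (pow_le_one₀ (by linarith [hple k]) (by linarith [hpnn k])) (pow_nonneg (hpnn k) _)
      _ = p k ^ (r+1) := mul_one _
      _ ≤ p k := pow_le_of_le_one (hpnn k) (hple k) (by omega)
  have hfs : Summable (fun k => p k ^ (r+1) * (1 - p k) ^ (n-r)) :=
    hsum.of_nonneg_of_le hfnn hfle
  have hmins : Summable (fun k => min (p k) (4/(n:ℝ))) :=
    summable_min p hpnn hsum (by positivity)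
  have hA0 : 0 ≤ (n.choose r : ℝ) * ∑' k, p k ^ (r+1) * (1 - p k) ^ (n-r) :=
    mul_nonneg (Nat.cast_nonneg _) (tsum_nonneg hfnn)
  have hAle : (n.choose r : ℝ) * (∑' k, p k ^ (r+1) * (1 - p k) ^ (n-r)) ≤
      4^r * ∑' k, min (p k) (4/(n:ℝ)) := by
    rw [← tsum_mul_left, ← tsum_mul_left]
    exact Summable.tsum_le_tsum (fun k => term_bound (hpnn k) (hple k) hrn hn0)
      (hfs.mul_left _) (hmins.mul_left _)
  have hT4 := hkey (4/(n:ℝ)) (by positivity) h3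
  have h1over : 1 / (4/(n:ℝ)) = (1/4) * (n:ℝ) := by
    rw [one_div_div]; ring
  have hpow4 : (4/(n:ℝ)) ^ (1-α) = (4:ℝ) ^ (1-α) * (n:ℝ) ^ (α-1) := by
    rw [Real.div_rpow (by norm_num) hnR.le,
      show (α - 1 : ℝ) = -(1-α) by ring, Real.rpow_neg hnR.le]
    ring
  have hnpow : 0 < (n:ℝ) ^ (α-1) := Real.rpow_pos_of_pos hnR _
  have hden : 0 < (n:ℝ) ^ (α-1) * |ℓ (n:ℝ)| := mul_pos hnpow habsn
  have hnorm : ‖((n.choose r : ℝ) * ∑' k, p k ^ (r+1) * (1 - p k) ^ (n-r)) /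
      ((n:ℝ) ^ (α-1) * ℓ (n:ℝ))‖ =
      ((n.choose r : ℝ) * ∑' k, p k ^ (r+1) * (1 - p k) ^ (n-r)) /
      ((n:ℝ) ^ (α-1) * |ℓ (n:ℝ)|) := by
    rw [Real.norm_eq_abs, abs_div, abs_of_nonneg hA0, abs_mul, abs_of_pos hnpow]
  rw [hnorm, div_lt_iff₀ hden]
  calc (n.choose r : ℝ) * (∑' k, p k ^ (r+1) * (1 - p k) ^ (n-r))
      ≤ 4^r * ∑' k, min (p k) (4/(n:ℝ)) := hAle
    _ ≤ 4^r * (η * (1-β)⁻¹ * ((4/(n:ℝ)) ^ (1-α) * |ℓ (1/(4/(n:ℝ)))|)) :=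
        mul_le_mul_of_nonneg_left hT4 (by positivity)
    _ = 4^r * (1-β)⁻¹ * ((4:ℝ) ^ (1-α)) * (η * ((n:ℝ) ^ (α-1) * |ℓ ((1/4) * (n:ℝ))|)) := by
        rw [h1over, hpow4]; ring
    _ ≤ 4^r * (1-β)⁻¹ * ((4:ℝ) ^ (1-α)) * (η * ((n:ℝ) ^ (α-1) * (2 * |ℓ (n:ℝ)|))) := by
        apply mul_le_mul_of_nonneg_left _
          (le_of_lt (mul_pos (mul_pos (by positivity) hinvβ) (by positivity)))
        apply mul_le_mul_of_nonneg_left _ hηpos.le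
        exact mul_le_mul_of_nonneg_left h2 hnpow.le
    _ = (Cco * η) * ((n:ℝ) ^ (α-1) * |ℓ (n:ℝ)|) := by rw [hCcodef]; ring
    _ < η' * ((n:ℝ) ^ (α-1) * |ℓ (n:ℝ)|) := by
        apply mul_lt_mul_of_pos_right _ hden
        rw [hηdef]
        calc Cco * (η' / Cfull) < Cfull * (η' / Cfull) := by
              apply mul_lt_mul_of_pos_right _ (by positivity)
              rw [hCfulldef]; linarith
          _ = η' := by field_simp
end
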